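/- arXiv:2505.04248 — 13 statements merged into one kernel-verified Lean document; each statement's English description precedes it below -/
import Mathlib

section
/- Let G be a finite simple graph with clique partition π = {W₁,…,W_r}, and let G^π be the clique-whiskered graph obtained by adding a new vertex wᵢ adjacent to every vertex of Wᵢ for each i. Then there is a bijection between the set of minimal vertex covers of G^π and the set of minimal vertex covers of the whisker graph W(G) (the graph obtained from G by attaching a pendant vertex to every vertex of G). -/
def cliqueWhisker {V ι : Type*} (G : SimpleGraph V) (p : V → ι) :
    SimpleGraph (V ⊕ ι) :=
  SimpleGraph.fromRel (fun a b =>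
    match a, b with
    | Sum.inl u, Sum.inl v => G.Adj u v
    | Sum.inl u, Sum.inr i => p u = i
    | _, _ => False)

def whiskerGraph {V : Type*} (G : SimpleGraph V) : SimpleGraph (V ⊕ V) :=
  SimpleGraph.fromRel (fun a b =>
    match a, b with
    | Sum.inl u, Sum.inl v => G.Adj u v
    | Sum.inl u, Sum.inr w => u = w
    | _, _ => False)

def IsVertexCover {V : Type*} (G : SimpleGraph V) (C : Set V) : Prop :=
  ∀ ⦃u v : V⦄, G.Adj u v → u ∈ C ∨ v ∈ C

def IsMinVertexCover {V : Type*} (G : SimpleGraph V) (C : Set V) : Prop :=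
  IsVertexCover G C ∧ ∀ D ⊆ C, IsVertexCover G D → D = C

def IsIndep {V : Type*} (G : SimpleGraph V) (A : Set V) : Prop :=
  ∀ u ∈ A, ∀ v ∈ A, ¬ G.Adj u v

lemma minCover_iff {V : Type*} (H : SimpleGraph V) (C : Set V) :
    IsMinVertexCover H C ↔
      IsVertexCover H C ∧ ∀ v ∈ C, ∃ u, u ∉ C ∧ H.Adj u v := by
  constructor
  · rintro ⟨hc, hmin⟩
    refine ⟨hc, ?_⟩
    intro v hv
    by_contra h
    push_neg at h
    have hD : IsVertexCover H (C \ {v}) := by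
      intro a b hab
      have hane : a ≠ b := H.ne_of_adj hab
      by_cases hav : a = v
      · subst hav
        have hb : b ∈ C := by
          by_contra hb
          exact h b hb hab.symm
        exact Or.inr ⟨hb, fun hbv => hane hbv.symm⟩
      · by_cases hbv : b = v
        · subst hbv
          have ha : a ∈ C := by
            by_contra ha
            exact h a ha hab
          exact Or.inl ⟨ha, hav⟩
        · rcases hc hab with ha | hb
          · exact Or.inl ⟨ha, hav⟩
          · exact Or.inr ⟨hb, hbv⟩
    have heq := hmin (C \ {v}) Set.diff_subset hD
    have hmem : v ∈ C \ {v} := by rw [heq]; exact hv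
    exact hmem.2 rfl
  · rintro ⟨hc, hmin⟩
    refine ⟨hc, ?_⟩
    intro D hDC hD
    apply Set.Subset.antisymm hDC
    intro v hv
    obtain ⟨u, huC, huv⟩ := hmin v hv
    rcases hD huv with hu | hv'
    · exact absurd (hDC hu) huC
    · exact hv'

section adj

variable {V ι : Type*} {G : SimpleGraph V} {p : V → ι}

lemma cw_adj_ll {u v : V} :
    (cliqueWhisker G p).Adj (Sum.inl u) (Sum.inl v) ↔ G.Adj u v := by
  simp only [cliqueWhisker, SimpleGraph.fromRel_adj, ne_eq, Sum.inl.injEq]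
  constructor
  · rintro ⟨-, h | h⟩
    · exact h
    · exact h.symm
  · intro h
    exact ⟨fun e => G.irrefl (e ▸ h), Or.inl h⟩

lemma cw_adj_lr {u : V} {i : ι} :
    (cliqueWhisker G p).Adj (Sum.inl u) (Sum.inr i) ↔ p u = i := by
  simp only [cliqueWhisker, SimpleGraph.fromRel_adj]
  constructor
  · rintro ⟨-, h | h⟩
    · exact h
    · exact h.elim
  · intro h
    exact ⟨by simp, Or.inl h⟩

lemma cw_adj_rr {i j : ι} :
    ¬ (cliqueWhisker G p).Adj (Sum.inr i) (Sum.inr j) := by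
  simp only [cliqueWhisker, SimpleGraph.fromRel_adj]
  rintro ⟨-, h | h⟩ <;> exact h

lemma wg_adj_ll {u v : V} :
    (whiskerGraph G).Adj (Sum.inl u) (Sum.inl v) ↔ G.Adj u v := by
  simp only [whiskerGraph, SimpleGraph.fromRel_adj, ne_eq, Sum.inl.injEq]
  constructor
  · rintro ⟨-, h | h⟩
    · exact h
    · exact h.symm
  · intro h
    exact ⟨fun e => G.irrefl (e ▸ h), Or.inl h⟩

lemma wg_adj_lr {u w : V} :
    (whiskerGraph G).Adj (Sum.inl u) (Sum.inr w) ↔ u = w := by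
  simp only [whiskerGraph, SimpleGraph.fromRel_adj]
  constructor
  · rintro ⟨-, h | h⟩
    · exact h
    · exact h.elim
  · intro h
    exact ⟨by simp, Or.inl h⟩

lemma wg_adj_rr {i j : V} :
    ¬ (whiskerGraph G).Adj (Sum.inr i) (Sum.inr j) := by
  simp only [whiskerGraph, SimpleGraph.fromRel_adj]
  rintro ⟨-, h | h⟩ <;> exact h

end adj

theorem stmt0 {V : Type*} [Fintype V] {r : ℕ} (G : SimpleGraph V) (p : V → Fin r)
    (hclique : ∀ u v : V, p u = p v → u ≠ v → G.Adj u v)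
    (hsurj : Function.Surjective p) :
    Nonempty ({C : Set (V ⊕ Fin r) // IsMinVertexCover (cliqueWhisker G p) C} ≃
      {C : Set (V ⊕ V) // IsMinVertexCover (whiskerGraph G) C}) := by
  classical
  -- cover associated to an independent set, for the clique-whiskered graph
  set Dcw : Set V → Set (V ⊕ Fin r) := fun A =>
    {x | match x with
         | Sum.inl v => v ∉ A
         | Sum.inr i => ∃ a ∈ A, p a = i} with hDcw
  -- cover associated to an independent set, for the whisker graph
  set Dwg : Set V → Set (V ⊕ V) := fun A =>
    {x | match x with
         | Sum.inl v => v ∉ A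
         | Sum.inr w => w ∈ A} with hDwg
  have hDcw_mem_l : ∀ (A : Set V) (v : V), Sum.inl v ∈ Dcw A ↔ v ∉ A := fun A v => Iff.rfl
  have hDcw_mem_r : ∀ (A : Set V) (i : Fin r), Sum.inr i ∈ Dcw A ↔ ∃ a ∈ A, p a = i :=
    fun A i => Iff.rfl
  have hDwg_mem_l : ∀ (A : Set V) (v : V), Sum.inl v ∈ Dwg A ↔ v ∉ A := fun A v => Iff.rfl
  have hDwg_mem_r : ∀ (A : Set V) (w : V), Sum.inr w ∈ Dwg A ↔ w ∈ A := fun A w => Iff.rfl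
  -- Dcw A is a minimal vertex cover when A is independent
  have hcw : ∀ A : Set V, IsIndep G A → IsMinVertexCover (cliqueWhisker G p) (Dcw A) := by
    intro A hA
    rw [minCover_iff]
    constructor
    · rintro (u | i) (v | j) hadj
      · rw [cw_adj_ll] at hadj
        by_cases hu : u ∈ A
        · exact Or.inr (fun hv => hA u hu v hv hadj)
        · exact Or.inl hu
      · rw [cw_adj_lr] at hadj
        by_cases hu : u ∈ A
        · exact Or.inr ⟨u, hu, hadj⟩
        · exact Or.inl hu
      · rw [(cliqueWhisker G p).adj_comm, cw_adj_lr] at hadj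
        by_cases hv : v ∈ A
        · exact Or.inl ⟨v, hv, hadj⟩
        · exact Or.inr hv
      · exact absurd hadj cw_adj_rr
    · rintro (v | i) hv
      · rw [hDcw_mem_l] at hv
        by_cases hex : ∃ a ∈ A, p a = p v
        · obtain ⟨a, haA, hpa⟩ := hex
          refine ⟨Sum.inl a, ?_, ?_⟩
          · rw [hDcw_mem_l]; simp [haA]
          · rw [cw_adj_ll]
            exact hclique a v hpa (fun e => hv (e ▸ haA))
        · refine ⟨Sum.inr (p v), ?_, ?_⟩
          · rw [hDcw_mem_r]; exact hex
          · rw [(cliqueWhisker G p).adj_comm, cw_adj_lr]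
      · rw [hDcw_mem_r] at hv
        obtain ⟨a, haA, hpa⟩ := hv
        refine ⟨Sum.inl a, ?_, ?_⟩
        · rw [hDcw_mem_l]; simp [haA]
        · rw [cw_adj_lr]; exact hpa
  -- Dwg A is a minimal vertex cover when A is independent
  have hwg : ∀ A : Set V, IsIndep G A → IsMinVertexCover (whiskerGraph G) (Dwg A) := by
    intro A hA
    rw [minCover_iff]
    constructor
    · rintro (u | u) (v | v) hadj
      · rw [wg_adj_ll] at hadj
        by_cases hu : u ∈ A
        · exact Or.inr (fun hv => hA u hu v hv hadj)
        · exact Or.inl hu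
      · rw [wg_adj_lr] at hadj
        subst hadj
        by_cases hu : u ∈ A
        · exact Or.inr hu
        · exact Or.inl hu
      · rw [(whiskerGraph G).adj_comm, wg_adj_lr] at hadj
        subst hadj
        by_cases hm : v ∈ A
        · exact Or.inl hm
        · exact Or.inr hm
      · exact absurd hadj wg_adj_rr
    · rintro (v | v) hv
      · refine ⟨Sum.inr v, ?_, ?_⟩
        · rw [hDwg_mem_r]; exact hv
        · rw [(whiskerGraph G).adj_comm, wg_adj_lr]
      · refine ⟨Sum.inl v, ?_, ?_⟩
        · rw [hDwg_mem_l]; exact not_not.2 ((hDwg_mem_r A v).1 hv)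
        · rw [wg_adj_lr]
      -- note hv : v ∈ A for the inr case
  -- extracting an independent set from a min cover (cliqueWhisker side)
  have indep_cw : ∀ C : Set (V ⊕ Fin r), IsMinVertexCover (cliqueWhisker G p) C →
      IsIndep G {v | Sum.inl v ∉ C} := by
    intro C hC u hu v hv hadj
    rcases hC.1 (cw_adj_ll.2 hadj : (cliqueWhisker G p).Adj (Sum.inl u) (Sum.inl v)) with h | h
    · exact hu h
    · exact hv h
  have indep_wg : ∀ C : Set (V ⊕ V), IsMinVertexCover (whiskerGraph G) C →
      IsIndep G {v | Sum.inl v ∉ C} := by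
    intro C hC u hu v hv hadj
    rcases hC.1 (wg_adj_ll.2 hadj : (whiskerGraph G).Adj (Sum.inl u) (Sum.inl v)) with h | h
    · exact hu h
    · exact hv h
  -- reconstruction lemmas
  have recon_cw : ∀ C : Set (V ⊕ Fin r), IsMinVertexCover (cliqueWhisker G p) C →
      Dcw {v | Sum.inl v ∉ C} = C := by
    intro C hC
    have hmin := (minCover_iff _ _).1 hC
    ext x
    cases x with
    | inl v =>
      rw [hDcw_mem_l]
      simp only [Set.mem_setOf_eq, not_not]
    | inr i =>
      rw [hDcw_mem_r]
      constructor
      · rintro ⟨a, ha, hpa⟩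
        simp only [Set.mem_setOf_eq] at ha
        rcases hmin.1 (cw_adj_lr.2 hpa : (cliqueWhisker G p).Adj (Sum.inl a) (Sum.inr i)) with h | h
        · exact absurd h ha
        · exact h
      · intro hi
        obtain ⟨u, huC, hadj⟩ := hmin.2 _ hi
        cases u with
        | inl a =>
          rw [cw_adj_lr] at hadj
          exact ⟨a, huC, hadj⟩
        | inr j => exact absurd hadj cw_adj_rr
  have recon_wg : ∀ C : Set (V ⊕ V), IsMinVertexCover (whiskerGraph G) C →
      Dwg {v | Sum.inl v ∉ C} = C := by
    intro C hC
    have hmin := (minCover_iff _ _).1 hC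
    ext x
    cases x with
    | inl v =>
      rw [hDwg_mem_l]
      simp only [Set.mem_setOf_eq, not_not]
    | inr w =>
      rw [hDwg_mem_r]
      simp only [Set.mem_setOf_eq]
      constructor
      · intro hw
        rcases hmin.1 (wg_adj_lr.2 rfl : (whiskerGraph G).Adj (Sum.inl w) (Sum.inr w)) with h | h
        · exact absurd h hw
        · exact h
      · intro hw
        obtain ⟨u, huC, hadj⟩ := hmin.2 _ hw
        cases u with
        | inl a =>
          rw [wg_adj_lr] at hadj
          subst hadj
          exact huC
        | inr b => exact absurd hadj wg_adj_rr
  -- equiv with independent sets, cliqueWhisker side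
  refine ⟨?_⟩
  have e1 : {C : Set (V ⊕ Fin r) // IsMinVertexCover (cliqueWhisker G p) C} ≃
      {A : Set V // IsIndep G A} :=
    { toFun := fun C => ⟨{v | Sum.inl v ∉ C.1}, indep_cw C.1 C.2⟩
      invFun := fun A => ⟨Dcw A.1, hcw A.1 A.2⟩
      left_inv := fun C => Subtype.ext (recon_cw C.1 C.2)
      right_inv := fun A => by
        apply Subtype.ext
        ext v
        simp only [Set.mem_setOf_eq, hDcw_mem_l, not_not] }
  have e2 : {C : Set (V ⊕ V) // IsMinVertexCover (whiskerGraph G) C} ≃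
      {A : Set V // IsIndep G A} :=
    { toFun := fun C => ⟨{v | Sum.inl v ∉ C.1}, indep_wg C.1 C.2⟩
      invFun := fun A => ⟨Dwg A.1, hwg A.1 A.2⟩
      left_inv := fun C => Subtype.ext (recon_wg C.1 C.2)
      right_inv := fun A => by
        apply Subtype.ext
        ext v
        simp only [Set.mem_setOf_eq, hDwg_mem_l, not_not] }
  exact e1.trans e2.symm
end

section
/- Let G be a finite simple graph with clique partition π = {W₁,…,W_r} and let C be a minimal vertex cover of the clique-whiskered graph G^π. If wᵢ ∈ C, then there is exactly one vertex of Wᵢ not contained in C. -/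
theorem stmt1 {V : Type*} [Fintype V] {r : ℕ} (G : SimpleGraph V) (p : V → Fin r)
    (hclique : ∀ u v : V, p u = p v → u ≠ v → G.Adj u v)
    (hsurj : Function.Surjective p)
    (C : Set (V ⊕ Fin r)) (hC : IsMinVertexCover (cliqueWhisker G p) C)
    (i : Fin r) (hi : Sum.inr i ∈ C) :
    ∃! x : V, p x = i ∧ (Sum.inl x : V ⊕ Fin r) ∉ C := by
  obtain ⟨hcov, hmin⟩ := hC
  -- existence
  have hex : ∃ x : V, p x = i ∧ (Sum.inl x : V ⊕ Fin r) ∉ C := by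
    by_contra h
    push_neg at h
    have hDcov : IsVertexCover (cliqueWhisker G p) (C \ {Sum.inr i}) := by
      intro u v huv
      obtain ⟨hne, hrel⟩ := huv
      match u, v with
      | Sum.inl a, Sum.inl b =>
        rcases hcov ⟨hne, hrel⟩ with h1 | h1
        · by_cases ha : (Sum.inl a : V ⊕ Fin r) = Sum.inr i
          · simp at ha
          · exact Or.inl ⟨h1, ha⟩
        · by_cases hb : (Sum.inl b : V ⊕ Fin r) = Sum.inr i
          · simp at hb
          · exact Or.inr ⟨h1, hb⟩
      | Sum.inl a, Sum.inr j =>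
        have hpj : p a = j := by
          rcases hrel with h1 | h1 <;> simpa using h1
        by_cases hji : j = i
        · subst hji
          exact Or.inl ⟨h a hpj, by simp⟩
        · rcases hcov ⟨hne, hrel⟩ with h1 | h1
          · exact Or.inl ⟨h1, by simp⟩
          · exact Or.inr ⟨h1, by simp [hji]⟩
      | Sum.inr j, Sum.inl a =>
        have hpj : p a = j := by
          rcases hrel with h1 | h1 <;> simpa using h1
        by_cases hji : j = i
        · subst hji
          exact Or.inr ⟨h a hpj, by simp⟩
        · rcases hcov ⟨hne, hrel⟩ with h1 | h1
          · exact Or.inl ⟨h1, by simp [hji]⟩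
          · exact Or.inr ⟨h1, by simp⟩
      | Sum.inr a, Sum.inr b =>
        rcases hrel with h1 | h1 <;> exact absurd h1 (by simp)
    have heq := hmin _ Set.diff_subset hDcov
    have : (Sum.inr i : V ⊕ Fin r) ∈ C \ {Sum.inr i} := heq.symm ▸ hi
    simp at this
  obtain ⟨x, hx, hxC⟩ := hex
  refine ⟨x, ⟨hx, hxC⟩, ?_⟩
  rintro y ⟨hy, hyC⟩
  by_contra hne
  have hadj : (cliqueWhisker G p).Adj (Sum.inl y) (Sum.inl x) := by
    refine ⟨by simpa using hne, Or.inl ?_⟩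
    exact hclique y x (hy.trans hx.symm) hne
  rcases hcov hadj with h1 | h1
  · exact hyC h1
  · exact hxC h1
end

section
/- Let G be a finite simple graph with clique partition π = {W₁,…,W_r}. For every nonnegative integer k, the number of independent sets of size k in the clique-whiskered graph G^π equals Σ_{ℓ=0}^{k} fℓ · C(r − ℓ, k − ℓ), where fℓ is the number of independent sets of size ℓ in G. -/
theorem stmt2 {V : Type*} [Fintype V] {r : ℕ} (G : SimpleGraph V) (p : V → Fin r)
    (hclique : ∀ u v : V, p u = p v → u ≠ v → G.Adj u v)
    (hsurj : Function.Surjective p) (k : ℕ) :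
    Nat.card {A : Finset (V ⊕ Fin r) //
        IsIndep (cliqueWhisker G p) (↑A : Set (V ⊕ Fin r)) ∧ A.card = k} =
      ∑ ℓ ∈ Finset.range (k + 1),
        Nat.card {A : Finset V // IsIndep G (↑A : Set V) ∧ A.card = ℓ} *
          Nat.choose (r - ℓ) (k - ℓ) := by
  classical
  have hadj_ll : ∀ u v : V, (cliqueWhisker G p).Adj (Sum.inl u) (Sum.inl v) ↔ G.Adj u v := by
    intro u v
    simp only [cliqueWhisker, SimpleGraph.fromRel_adj]
    constructor
    · rintro ⟨-, h | h⟩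
      · exact h
      · exact h.symm
    · intro h
      exact ⟨by simpa using h.ne, Or.inl h⟩
  have hadj_lr : ∀ (u : V) (i : Fin r),
      (cliqueWhisker G p).Adj (Sum.inl u) (Sum.inr i) ↔ p u = i := by
    intro u i
    simp [cliqueWhisker, SimpleGraph.fromRel_adj]
  have hadj_rr : ∀ i j : Fin r, ¬ (cliqueWhisker G p).Adj (Sum.inr i) (Sum.inr j) := by
    intro i j
    simp [cliqueWhisker, SimpleGraph.fromRel_adj]
  -- characterization of independent sets in the whiskered graph
  have hw : ∀ A : Finset (V ⊕ Fin r),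
      IsIndep (cliqueWhisker G p) (↑A : Set (V ⊕ Fin r)) ↔
        (IsIndep G (↑A.toLeft : Set V) ∧ ∀ u ∈ A.toLeft, p u ∉ A.toRight) := by
    intro A
    constructor
    · intro h
      refine ⟨?_, ?_⟩
      · intro u hu v hv huv
        have hu' : Sum.inl u ∈ A := by simpa using hu
        have hv' : Sum.inl v ∈ A := by simpa using hv
        exact h _ (by simpa using hu') _ (by simpa using hv') ((hadj_ll u v).2 huv)
      · intro u hu hpu
        have hu' : Sum.inl u ∈ A := by simpa using hu
        have hpu' : Sum.inr (p u) ∈ A := by simpa using hpu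
        exact h _ (by simpa using hu') _ (by simpa using hpu') ((hadj_lr u (p u)).2 rfl)
    · rintro ⟨h1, h2⟩ a ha b hb hab
      have ha' : a ∈ A := by simpa using ha
      have hb' : b ∈ A := by simpa using hb
      match a, b with
      | Sum.inl u, Sum.inl v =>
          exact h1 u (by simpa using ha') v (by simpa using hb') ((hadj_ll u v).1 hab)
      | Sum.inl u, Sum.inr i =>
          have : p u = i := (hadj_lr u i).1 hab
          exact h2 u (by simpa using ha') (by simpa [this] using hb')
      | Sum.inr i, Sum.inl u =>
          have : p u = i := (hadj_lr u i).1 hab.symm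
          exact h2 u (by simpa using hb') (by simpa [this] using ha')
      | Sum.inr i, Sum.inr j => exact hadj_rr i j hab
  -- image of an independent set under p has the same cardinality
  have himg : ∀ S : Finset V, IsIndep G (↑S : Set V) → (S.image p).card = S.card := by
    intro S hS
    refine Finset.card_image_of_injOn ?_
    intro u hu v hv huv
    by_contra hne
    exact hS u (by simpa using hu) v (by simpa using hv) (hclique u v huv hne)
  -- translate Nat.card to filter cards
  have hLHS : Nat.card {A : Finset (V ⊕ Fin r) //
      IsIndep (cliqueWhisker G p) (↑A : Set (V ⊕ Fin r)) ∧ A.card = k} =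
      (Finset.univ.filter fun A : Finset (V ⊕ Fin r) =>
        IsIndep (cliqueWhisker G p) (↑A : Set (V ⊕ Fin r)) ∧ A.card = k).card := by
    simp [Nat.card_eq_fintype_card, Fintype.card_subtype]
  have hfl : ∀ ℓ : ℕ, Nat.card {A : Finset V // IsIndep G (↑A : Set V) ∧ A.card = ℓ} =
      (Finset.univ.filter fun S : Finset V => IsIndep G (↑S : Set V) ∧ S.card = ℓ).card := by
    intro ℓ
    simp [Nat.card_eq_fintype_card, Fintype.card_subtype]
  rw [hLHS]
  -- the "pair" set
  set ℬ : Finset (Finset V × Finset (Fin r)) :=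
    Finset.univ.filter (fun x => IsIndep G (↑x.1 : Set V) ∧ (∀ u ∈ x.1, p u ∉ x.2) ∧
      x.1.card + x.2.card = k) with hℬ
  have step1 : (Finset.univ.filter fun A : Finset (V ⊕ Fin r) =>
      IsIndep (cliqueWhisker G p) (↑A : Set (V ⊕ Fin r)) ∧ A.card = k).card = ℬ.card := by
    refine Finset.card_nbij' (fun A => (A.toLeft, A.toRight))
      (fun x => x.1.disjSum x.2) ?_ ?_ ?_ ?_
    · intro A hA
      simp only [Finset.mem_coe, Finset.mem_filter, Finset.mem_univ, true_and] at hA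
      obtain ⟨hInd, hcard⟩ := hA
      obtain ⟨h1, h2⟩ := (hw A).1 hInd
      simp only [Finset.mem_coe, hℬ, Finset.mem_filter, Finset.mem_univ, true_and]
      exact ⟨h1, h2, by rw [Finset.card_toLeft_add_card_toRight]; exact hcard⟩
    · intro x hx
      simp only [Finset.mem_coe, hℬ, Finset.mem_filter, Finset.mem_univ, true_and] at hx
      obtain ⟨h1, h2, h3⟩ := hx
      simp only [Finset.mem_coe, Finset.mem_filter, Finset.mem_univ, true_and]
      constructor
      · rw [hw]
        constructor
        · simpa using h1
        · intro u hu
          simp only [Finset.toLeft_disjSum] at hu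
          simpa using h2 u hu
      · rw [Finset.card_disjSum]; exact h3
    · intro A _; exact Finset.toLeft_disjSum_toRight
    · intro x _; simp
  rw [step1]
  -- the set of possible left parts
  set 𝒮 : Finset (Finset V) :=
    Finset.univ.filter (fun S => IsIndep G (↑S : Set V) ∧ S.card ≤ k) with h𝒮
  have step2 : ℬ.card = ∑ S ∈ 𝒮, (ℬ.filter fun x => x.1 = S).card := by
    refine Finset.card_eq_sum_card_fiberwise ?_
    intro x hx
    simp only [Finset.mem_coe, hℬ, Finset.mem_filter, Finset.mem_univ, true_and] at hx
    simp only [Finset.mem_coe, h𝒮, Finset.mem_filter, Finset.mem_univ, true_and]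
    exact ⟨hx.1, le_of_le_of_eq (Nat.le_add_right _ _) hx.2.2⟩
  rw [step2]
  -- count fibers
  have step3 : ∀ S ∈ 𝒮, (ℬ.filter fun x => x.1 = S).card =
      Nat.choose (r - S.card) (k - S.card) := by
    intro S hS
    simp only [h𝒮, Finset.mem_filter, Finset.mem_univ, true_and] at hS
    obtain ⟨hSind, hSle⟩ := hS
    have hcompl : ((S.image p)ᶜ : Finset (Fin r)).card = r - S.card := by
      rw [Finset.card_compl, himg S hSind]
      simp
    have : (ℬ.filter fun x => x.1 = S).card =
        (Finset.powersetCard (k - S.card) ((S.image p)ᶜ)).card := by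
      refine Finset.card_nbij' (fun x => x.2) (fun T => (S, T)) ?_ ?_ ?_ ?_
      · intro x hx
        rw [Finset.mem_coe, Finset.mem_filter] at hx
        obtain ⟨hxB, h4⟩ := hx
        simp only [hℬ, Finset.mem_filter, Finset.mem_univ, true_and] at hxB
        obtain ⟨h1, h2, h3⟩ := hxB
        subst h4
        rw [Finset.mem_coe, Finset.mem_powersetCard]
        constructor
        · intro i hi
          rw [Finset.mem_compl]
          intro hmem
          obtain ⟨u, hu, hpu⟩ := Finset.mem_image.1 hmem
          exact h2 u hu (by rwa [hpu])
        · show x.2.card = k - x.1.card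
          omega
      · intro T hT
        rw [Finset.mem_coe, Finset.mem_powersetCard] at hT
        obtain ⟨hT1, hT2⟩ := hT
        rw [Finset.mem_coe, Finset.mem_filter]
        refine ⟨?_, rfl⟩
        simp only [hℬ, Finset.mem_filter, Finset.mem_univ, true_and]
        refine ⟨hSind, ?_, by omega⟩
        intro u hu hpu
        exact (Finset.mem_compl.1 (hT1 hpu)) (Finset.mem_image_of_mem p hu)
      · intro x hx
        simp only [Finset.mem_coe, Finset.mem_filter] at hx
        rw [← hx.2]
      · intro T _; rfl
    rw [this, Finset.card_powersetCard, hcompl]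
  rw [Finset.sum_congr rfl step3]
  -- regroup by cardinality
  have step4 : ∑ ℓ ∈ Finset.range (k + 1),
      ∑ S ∈ 𝒮.filter (fun S => S.card = ℓ), Nat.choose (r - S.card) (k - S.card) =
      ∑ S ∈ 𝒮, Nat.choose (r - S.card) (k - S.card) := by
    refine Finset.sum_fiberwise_of_maps_to ?_ _
    intro S hS
    simp only [Finset.mem_coe, h𝒮, Finset.mem_filter, Finset.mem_univ, true_and] at hS
    simp only [Finset.mem_range]
    omega
  rw [← step4]
  refine Finset.sum_congr rfl ?_
  intro ℓ hℓ
  rw [Finset.mem_range] at hℓ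
  have hfib : 𝒮.filter (fun S => S.card = ℓ) =
      Finset.univ.filter (fun S : Finset V => IsIndep G (↑S : Set V) ∧ S.card = ℓ) := by
    ext S
    simp only [h𝒮, Finset.filter_filter, Finset.mem_filter, Finset.mem_univ, true_and]
    constructor
    · rintro ⟨⟨h1, h2⟩, h3⟩; exact ⟨h1, h3⟩
    · rintro ⟨h1, h2⟩; exact ⟨⟨h1, by omega⟩, h2⟩
  rw [hfib, hfl ℓ]
  rw [Finset.sum_congr rfl (fun S hS => by
    simp only [Finset.mem_filter] at hS
    rw [hS.2.2])]
  rw [Finset.sum_const, smul_eq_mul]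
end

section
/- Let G be a finite simple graph with n vertices and clique partition π = {W₁,…,W_r}. For every nonnegative integer k, the number of independent sets of size k in the whisker graph W(G) equals Σ_{ℓ=0}^{k} fℓ · C(n − ℓ, k − ℓ), where fℓ is the number of independent sets of size ℓ in G. Consequently, the number of independent sets of size k in W(G) equals the number of faces of size k of the simplicial join of the independence complex of G^π with the simplex on n − r new vertices. -/
open Finset Sum

attribute [local instance] Classical.propDecidable

private lemma natCard_subtype' {α : Type*} [Fintype α] (q : α → Prop) [DecidablePred q] :
    Nat.card {x // q x} = (Finset.univ.filter q).card := by
  rw [Nat.card_eq_fintype_card, Fintype.card_subtype]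

private lemma core_count' {V W : Type*} [Fintype V] [Fintype W] [DecidableEq W]
    (G : SimpleGraph V) (k : ℕ) (bad : Finset V → Finset W)
    (hbad : ∀ L : Finset V, IsIndep G ↑L → L.card ≤ k →
      Fintype.card W - (bad L).card = Fintype.card V - L.card) :
    (Finset.univ.filter fun q : Finset V × Finset W =>
        IsIndep G ↑q.1 ∧ q.2 ⊆ (bad q.1)ᶜ ∧ q.1.card + q.2.card = k).card =
    ∑ L ∈ Finset.univ.filter fun L : Finset V => IsIndep G ↑L ∧ L.card ≤ k,
      (Fintype.card V - L.card).choose (k - L.card) := by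
  classical
  rw [Finset.card_eq_sum_card_fiberwise (f := Prod.fst)
      (t := Finset.univ.filter fun L : Finset V => IsIndep G ↑L ∧ L.card ≤ k)
      (fun q hq => by
        simp only [mem_coe, mem_filter, mem_univ, true_and] at hq ⊢
        exact ⟨hq.1, by omega⟩)]
  refine Finset.sum_congr rfl fun L hL => ?_
  simp only [mem_filter, mem_univ, true_and] at hL
  obtain ⟨hind, hle⟩ := hL
  rw [Finset.card_nbij' (i := Prod.snd) (j := fun M => (L, M))
      (t := ((bad L)ᶜ).powersetCard (k - L.card)) ?_ ?_ ?_ ?_]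
  · rw [Finset.card_powersetCard, Finset.card_compl, hbad L hind hle]
  · rintro ⟨L', M⟩ hq
    simp only [mem_coe, mem_filter, mem_univ, true_and, mem_powersetCard] at hq ⊢
    obtain ⟨⟨h1, h2, h3⟩, h4⟩ := hq
    subst h4
    exact ⟨h2, by omega⟩
  · intro M hM
    simp only [mem_coe, mem_powersetCard] at hM
    simp only [mem_coe, mem_filter, mem_univ, true_and]
    exact ⟨⟨hind, hM.1, by omega⟩, trivial⟩
  · rintro ⟨L', M⟩ hq
    simp only [mem_coe, mem_filter, mem_univ, true_and] at hq
    simp [hq.2]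
  · intro M hM
    rfl

private lemma group_sum' {V : Type*} [Fintype V] (G : SimpleGraph V) (k : ℕ) :
    ∑ L ∈ Finset.univ.filter fun L : Finset V => IsIndep G ↑L ∧ L.card ≤ k,
      (Fintype.card V - L.card).choose (k - L.card) =
    ∑ ℓ ∈ Finset.range (k + 1),
      (Finset.univ.filter fun L : Finset V => IsIndep G ↑L ∧ L.card = ℓ).card *
        (Fintype.card V - ℓ).choose (k - ℓ) := by
  classical
  rw [← Finset.sum_fiberwise_of_maps_to (g := Finset.card) (t := Finset.range (k + 1))
      (fun L hL => by
        simp only [mem_filter, mem_univ, true_and] at hL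
        simp only [mem_range]
        omega)]
  refine Finset.sum_congr rfl fun ℓ hℓ => ?_
  simp only [mem_range] at hℓ
  have hset : ((Finset.univ.filter fun L : Finset V => IsIndep G ↑L ∧ L.card ≤ k).filter
      fun L => L.card = ℓ) =
      Finset.univ.filter fun L : Finset V => IsIndep G ↑L ∧ L.card = ℓ := by
    ext L
    simp only [mem_filter, mem_univ, true_and]
    constructor
    · rintro ⟨⟨h1, h2⟩, h3⟩; exact ⟨h1, h3⟩
    · rintro ⟨h1, h3⟩; exact ⟨⟨h1, by omega⟩, h3⟩
  rw [hset]
  rw [Finset.sum_congr rfl (fun L hL => by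
    simp only [mem_filter, mem_univ, true_and] at hL
    rw [hL.2])]
  rw [Finset.sum_const, smul_eq_mul]

theorem stmt3 {V : Type*} [Fintype V] {r : ℕ} (G : SimpleGraph V) (p : V → Fin r)
    (hclique : ∀ u v : V, p u = p v → u ≠ v → G.Adj u v)
    (hsurj : Function.Surjective p) (k : ℕ) :
    (Nat.card {A : Finset (V ⊕ V) //
        IsIndep (whiskerGraph G) (↑A : Set (V ⊕ V)) ∧ A.card = k} =
      ∑ ℓ ∈ Finset.range (k + 1),
        Nat.card {A : Finset V // IsIndep G (↑A : Set V) ∧ A.card = ℓ} *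
          Nat.choose (Fintype.card V - ℓ) (k - ℓ)) ∧
    Nat.card {A : Finset (V ⊕ V) //
        IsIndep (whiskerGraph G) (↑A : Set (V ⊕ V)) ∧ A.card = k} =
      Nat.card {B : Finset ((V ⊕ Fin r) ⊕ Fin (Fintype.card V - r)) //
        IsIndep (cliqueWhisker G p) {x | Sum.inl x ∈ B} ∧ B.card = k} := by
  classical
  have hrn : r ≤ Fintype.card V := by
    simpa using Fintype.card_le_of_surjective p hsurj
  -- adjacency characterizations
  have adj_ll : ∀ u v : V, (whiskerGraph G).Adj (Sum.inl u) (Sum.inl v) ↔ G.Adj u v := by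
    intro u v
    simp only [whiskerGraph, SimpleGraph.fromRel_adj, ne_eq, inl.injEq]
    constructor
    · rintro ⟨h, h2 | h2⟩; exacts [h2, h2.symm]
    · exact fun h => ⟨G.ne_of_adj h, Or.inl h⟩
  have adj_lr : ∀ u w : V, (whiskerGraph G).Adj (Sum.inl u) (Sum.inr w) ↔ u = w := by
    intro u w; simp [whiskerGraph, SimpleGraph.fromRel_adj]
  have adj_rr : ∀ u w : V, ¬ (whiskerGraph G).Adj (Sum.inr u) (Sum.inr w) := by
    intro u w; simp [whiskerGraph, SimpleGraph.fromRel_adj]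
  have cadj_ll : ∀ u v : V, (cliqueWhisker G p).Adj (Sum.inl u) (Sum.inl v) ↔ G.Adj u v := by
    intro u v
    simp only [cliqueWhisker, SimpleGraph.fromRel_adj, ne_eq, inl.injEq]
    constructor
    · rintro ⟨h, h2 | h2⟩; exacts [h2, h2.symm]
    · exact fun h => ⟨G.ne_of_adj h, Or.inl h⟩
  have cadj_lr : ∀ (u : V) (i : Fin r),
      (cliqueWhisker G p).Adj (Sum.inl u) (Sum.inr i) ↔ p u = i := by
    intro u i; simp [cliqueWhisker, SimpleGraph.fromRel_adj]
  have cadj_rr : ∀ i j : Fin r, ¬ (cliqueWhisker G p).Adj (Sum.inr i) (Sum.inr j) := by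
    intro i j; simp [cliqueWhisker, SimpleGraph.fromRel_adj]
  -- step 1 : whisker graph count equals pair count
  have key1 : Nat.card {A : Finset (V ⊕ V) //
      IsIndep (whiskerGraph G) (↑A : Set (V ⊕ V)) ∧ A.card = k} =
      (Finset.univ.filter fun q : Finset V × Finset V =>
        IsIndep G ↑q.1 ∧ q.2 ⊆ ((fun L : Finset V => L) q.1)ᶜ ∧ q.1.card + q.2.card = k).card := by
    rw [natCard_subtype']
    refine Finset.card_nbij' (i := fun A => (A.toLeft, A.toRight))
      (j := fun q => q.1.disjSum q.2) ?_ ?_ ?_ ?_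
    · intro A hA
      simp only [mem_coe, mem_filter, mem_univ, true_and] at hA ⊢
      obtain ⟨hind, hcard⟩ := hA
      refine ⟨fun u hu v hv hadj => ?_, fun w hw => ?_, ?_⟩
      · simp only [mem_coe, mem_toLeft] at hu hv
        exact hind (Sum.inl u) hu (Sum.inl v) hv ((adj_ll u v).2 hadj)
      · simp only [mem_toRight] at hw
        simp only [mem_compl, mem_toLeft]
        intro hwl
        exact hind (Sum.inl w) hwl (Sum.inr w) hw ((adj_lr w w).2 rfl)
      · rw [card_toLeft_add_card_toRight]; exact hcard
    · rintro ⟨L, R⟩ hq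
      simp only [mem_coe, mem_filter, mem_univ, true_and] at hq ⊢
      obtain ⟨hind, hsub, hcard⟩ := hq
      constructor
      · rintro (u | u) hu (v | v) hv hadj
        · simp only [mem_coe, inl_mem_disjSum] at hu hv
          exact hind u hu v hv ((adj_ll u v).1 hadj)
        · simp only [mem_coe, inl_mem_disjSum, inr_mem_disjSum] at hu hv
          have := (adj_lr u v).1 hadj
          subst this
          exact (mem_compl.1 (hsub hv)) hu
        · simp only [mem_coe, inl_mem_disjSum, inr_mem_disjSum] at hu hv
          have := (adj_lr v u).1 hadj.symm
          subst this
          exact (mem_compl.1 (hsub hu)) hv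
        · exact adj_rr u v hadj
      · rw [card_disjSum]; exact hcard
    · intro A hA
      exact toLeft_disjSum_toRight
    · rintro ⟨L, R⟩ hq
      simp
  have key1' := core_count' (W := V) G k (fun L => L)
    (fun L _ _ => rfl)
  -- step 2 : clique whisker count equals pair count
  set m := Fintype.card V - r with hm
  have hsumcard : Fintype.card (Fin r ⊕ Fin m) = Fintype.card V := by
    simp only [Fintype.card_sum, Fintype.card_fin, hm]
    omega
  have hCiff : ∀ C : Finset (V ⊕ Fin r),
      IsIndep (cliqueWhisker G p) ↑C ↔
      (IsIndep G ↑C.toLeft ∧ ∀ v ∈ C.toLeft, p v ∉ C.toRight) := by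
    intro C
    constructor
    · intro h
      refine ⟨fun u hu v hv hadj => ?_, fun v hv hcon => ?_⟩
      · simp only [mem_coe, mem_toLeft] at hu hv
        exact h (Sum.inl u) hu (Sum.inl v) hv ((cadj_ll u v).2 hadj)
      · simp only [mem_toLeft] at hv
        simp only [mem_toRight] at hcon
        exact h (Sum.inl v) hv (Sum.inr (p v)) hcon ((cadj_lr v (p v)).2 rfl)
    · rintro ⟨h1, h2⟩ x hx y hy hadj
      simp only [mem_coe] at hx hy
      match x, y with
      | Sum.inl u, Sum.inl v =>
        exact h1 u (by simpa using hx) v (by simpa using hy) ((cadj_ll u v).1 hadj)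
      | Sum.inl u, Sum.inr i =>
        have := (cadj_lr u i).1 hadj
        subst this
        exact h2 u (by simpa using hx) (by simpa using hy)
      | Sum.inr i, Sum.inl u =>
        have := (cadj_lr u i).1 hadj.symm
        subst this
        exact h2 u (by simpa using hy) (by simpa using hx)
      | Sum.inr i, Sum.inr j => exact cadj_rr i j hadj
  have hsetB : ∀ B : Finset ((V ⊕ Fin r) ⊕ Fin m),
      {x | Sum.inl x ∈ B} = (↑B.toLeft : Set (V ⊕ Fin r)) := by
    intro B; ext x; simp [mem_toLeft]
  have key2 : Nat.card {B : Finset ((V ⊕ Fin r) ⊕ Fin m) //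
      IsIndep (cliqueWhisker G p) {x | Sum.inl x ∈ B} ∧ B.card = k} =
      (Finset.univ.filter fun q : Finset V × Finset (Fin r ⊕ Fin m) =>
        IsIndep G ↑q.1 ∧
          q.2 ⊆ ((fun L : Finset V => (L.image p).map ⟨Sum.inl, Sum.inl_injective⟩) q.1)ᶜ ∧
          q.1.card + q.2.card = k).card := by
    rw [natCard_subtype']
    refine Finset.card_nbij'
      (i := fun B => (B.toLeft.toLeft, B.toLeft.toRight.disjSum B.toRight))
      (j := fun q => (q.1.disjSum q.2.toLeft).disjSum q.2.toRight) ?_ ?_ ?_ ?_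
    · intro B hB
      simp only [mem_coe, mem_filter, mem_univ, true_and] at hB ⊢
      obtain ⟨hind, hcard⟩ := hB
      rw [hsetB, hCiff] at hind
      obtain ⟨h1, h2⟩ := hind
      refine ⟨h1, ?_, ?_⟩
      · rintro (i | z) hx
        · simp only [inl_mem_disjSum] at hx
          simp only [mem_compl, mem_map, mem_image, Function.Embedding.coeFn_mk]
          rintro ⟨y, ⟨v, hv, hpv⟩, hy⟩
          have : y = i := by injection hy
          subst this
          subst hpv
          exact h2 v hv hx
        · simp only [mem_compl, mem_map, Function.Embedding.coeFn_mk]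
          rintro ⟨y, -, hy⟩
          exact absurd hy Sum.inl_ne_inr
      · rw [card_disjSum, ← hcard, ← card_toLeft_add_card_toRight (u := B),
          ← card_toLeft_add_card_toRight (u := B.toLeft)]
        omega
    · rintro ⟨L, M⟩ hq
      simp only [mem_coe, mem_filter, mem_univ, true_and] at hq ⊢
      obtain ⟨hind, hsub, hcard⟩ := hq
      constructor
      · rw [hsetB, hCiff]
        simp only [toLeft_disjSum, toRight_disjSum]
        refine ⟨hind, fun v hv hcon => ?_⟩
        simp only [mem_toLeft] at hcon
        have := hsub hcon
        simp only [mem_compl, mem_map, mem_image, Function.Embedding.coeFn_mk] at this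
        exact this ⟨p v, ⟨v, hv, rfl⟩, rfl⟩
      · rw [card_disjSum, card_disjSum, ← hcard, ← card_toLeft_add_card_toRight (u := M)]
        omega
    · intro B hB
      simp [toLeft_disjSum_toRight]
    · rintro ⟨L, M⟩ hq
      simp [toLeft_disjSum_toRight]
  have hbad2 : ∀ L : Finset V, IsIndep G ↑L → L.card ≤ k →
      Fintype.card (Fin r ⊕ Fin m) -
        ((L.image p).map ⟨Sum.inl, Sum.inl_injective⟩ : Finset (Fin r ⊕ Fin m)).card =
          Fintype.card V - L.card := by
    intro L hind _
    have himg : (L.image p).card = L.card := by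
      apply Finset.card_image_of_injOn
      intro u hu v hv huv
      by_contra hne
      exact hind u (by simpa using hu) v (by simpa using hv) (hclique u v huv hne)
    rw [Finset.card_map, himg, hsumcard]
  have key2' := core_count' (W := Fin r ⊕ Fin m) G k
    (fun L => (L.image p).map ⟨Sum.inl, Sum.inl_injective⟩) hbad2
  -- conclude
  have hf : ∀ ℓ : ℕ, Nat.card {A : Finset V // IsIndep G (↑A : Set V) ∧ A.card = ℓ} =
      (Finset.univ.filter fun L : Finset V => IsIndep G ↑L ∧ L.card = ℓ).card := by
    intro ℓ; rw [natCard_subtype']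
  constructor
  · rw [key1, key1', group_sum']
    exact Finset.sum_congr rfl fun ℓ _ => by rw [hf ℓ]
  · rw [key1, key1', key2]
    exact key2'.symm
end

section
/- Let G be a finite simple graph with clique partition π = {W₁,…,W_r}. Then every maximal independent set of the clique-whiskered graph G^π has exactly r vertices; in particular G^π is well-covered. -/
theorem stmt4 {V : Type*} [Fintype V] {r : ℕ} (G : SimpleGraph V) (p : V → Fin r)
    (hclique : ∀ u v : V, p u = p v → u ≠ v → G.Adj u v)
    (hsurj : Function.Surjective p)
    (A : Set (V ⊕ Fin r)) (hA : IsIndep (cliqueWhisker G p) A)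
    (hmax : ∀ B, IsIndep (cliqueWhisker G p) B → A ⊆ B → A = B) :
    A.ncard = r := by
  classical
  set f : V ⊕ Fin r → Fin r := Sum.elim p id with hf
  have hinj : Set.InjOn f A := by
    rintro (u | i) hu (v | j) hv h
    · simp only [hf, Sum.elim_inl] at h
      by_contra hne
      have hne' : u ≠ v := fun huv => hne (by rw [huv])
      exact hA _ hu _ hv ⟨by simp [hne'], Or.inl (hclique u v h hne')⟩
    · simp only [hf, Sum.elim_inl, Sum.elim_inr] at h
      exact absurd ⟨by simp, Or.inl h⟩ (hA _ hu _ hv)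
    · simp only [hf, Sum.elim_inl, Sum.elim_inr] at h
      exact absurd ⟨by simp, Or.inr h.symm⟩ (hA _ hu _ hv)
    · simp only [hf, Sum.elim_inr] at h
      simpa using h
  have hsurjA : ∀ i : Fin r, ∃ a ∈ A, f a = i := by
    intro i
    by_contra hni
    push_neg at hni
    have hind : IsIndep (cliqueWhisker G p) (A ∪ {Sum.inr i}) := by
      rintro u (hu | hu) v (hv | hv)
      · exact hA _ hu _ hv
      · rcases hv with rfl
        rintro ⟨-, h1 | h1⟩
        · cases u with
          | inl u => exact hni _ hu h1
          | inr j => exact h1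
        · cases u <;> exact h1
      · rcases hu with rfl
        rintro ⟨-, h1 | h1⟩
        · cases v <;> exact h1
        · cases v with
          | inl v => exact hni _ hv h1
          | inr j => exact h1
      · rcases hu with rfl; rcases hv with rfl
        exact (cliqueWhisker G p).irrefl
    have := hmax _ hind Set.subset_union_left
    have hi : Sum.inr i ∈ A := this ▸ Set.mem_union_right _ rfl
    exact hni _ hi rfl
  have himg : f '' A = Set.univ := by
    ext i
    simp only [Set.mem_image, Set.mem_univ, iff_true]
    obtain ⟨a, ha, hfa⟩ := hsurjA i
    exact ⟨a, ha, hfa⟩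
  calc A.ncard = (f '' A).ncard := (Set.ncard_image_of_injOn hinj).symm
    _ = (Set.univ : Set (Fin r)).ncard := by rw [himg]
    _ = r := by simp [Set.ncard_univ]
end

section
/- Let G be a finite simple graph with clique partition π = {W₁,…,W_r}. Then the clique-whiskered graph G^π is vertex decomposable. -/
def complexLink {V : Type*} [DecidableEq V] (Δ : Set (Finset V)) (x : V) :
    Set (Finset V) :=
  {F | x ∉ F ∧ insert x F ∈ Δ}

def complexDel {V : Type*} (Δ : Set (Finset V)) (x : V) : Set (Finset V) :=
  {F | x ∉ F ∧ F ∈ Δ}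

def IsFacet {V : Type*} (Δ : Set (Finset V)) (F : Finset V) : Prop :=
  F ∈ Δ ∧ ∀ G ∈ Δ, F ⊆ G → F = G

inductive VertexDecomposable {V : Type*} [DecidableEq V] : Set (Finset V) → Prop
  | void : VertexDecomposable ∅
  | simplex (F : Finset V) : VertexDecomposable {G | G ⊆ F}
  | step (Δ : Set (Finset V)) (x : V)
      (hlink : VertexDecomposable (complexLink Δ x))
      (hdel : VertexDecomposable (complexDel Δ x))
      (hfac : ∀ F, IsFacet (complexDel Δ x) F → IsFacet Δ F) :
      VertexDecomposable Δ

def indepComplex {V : Type*} (G : SimpleGraph V) : Set (Finset V) :=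
  {F | IsIndep G (↑F : Set V)}

section Aux

attribute [local instance] Classical.propDecidable

variable {V : Type*} [DecidableEq V] {r : ℕ}

lemma cw_adj_inl_inl (G : SimpleGraph V) (p : V → Fin r) (u v : V) :
    (cliqueWhisker G p).Adj (Sum.inl u) (Sum.inl v) ↔ G.Adj u v := by
  simp only [cliqueWhisker, SimpleGraph.fromRel_adj]
  constructor
  · rintro ⟨hne, h | h⟩
    · exact h
    · exact h.symm
  · intro h
    exact ⟨by simpa using h.ne, Or.inl h⟩

lemma cw_adj_inl_inr (G : SimpleGraph V) (p : V → Fin r) (u : V) (i : Fin r) :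
    (cliqueWhisker G p).Adj (Sum.inl u) (Sum.inr i) ↔ p u = i := by
  simp [cliqueWhisker, SimpleGraph.fromRel_adj]

lemma cw_not_adj_inr_inr (G : SimpleGraph V) (p : V → Fin r) (i j : Fin r) :
    ¬ (cliqueWhisker G p).Adj (Sum.inr i) (Sum.inr j) := by
  simp [cliqueWhisker, SimpleGraph.fromRel_adj]

lemma isIndep_subset {G : SimpleGraph V} {S T : Set V} (hST : T ⊆ S)
    (hS : IsIndep G S) : IsIndep G T :=
  fun u hu v hv => hS u (hST hu) v (hST hv)

/-- The faces of the independence complex of the clique-whiskered graph supported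
on the allowed vertex set `A ⊕ B`. -/
def deltaAB (G : SimpleGraph V) (p : V → Fin r) (A : Finset V) (B : Finset (Fin r)) :
    Set (Finset (V ⊕ Fin r)) :=
  {F | F ⊆ A.disjSum B ∧ IsIndep (cliqueWhisker G p) (↑F : Set (V ⊕ Fin r))}

lemma deltaAB_empty (G : SimpleGraph V) (p : V → Fin r) (B : Finset (Fin r)) :
    deltaAB G p ∅ B = {F | F ⊆ (∅ : Finset V).disjSum B} := by
  ext F
  simp only [deltaAB, Set.mem_setOf_eq, and_iff_left_iff_imp]
  intro hF
  intro a ha b hb hadj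
  rcases Finset.mem_coe.mp ha with ha'
  rcases Finset.mem_coe.mp hb with hb'
  have ha2 := hF ha'
  have hb2 := hF hb'
  rcases a with a | a
  · simpa using (Finset.inl_mem_disjSum.mp ha2)
  rcases b with b | b
  · simpa using (Finset.inl_mem_disjSum.mp hb2)
  · exact cw_not_adj_inr_inr G p a b hadj

lemma deltaAB_del (G : SimpleGraph V) (p : V → Fin r) (A : Finset V)
    (B : Finset (Fin r)) (u : V) :
    complexDel (deltaAB G p A B) (Sum.inl u) = deltaAB G p (A.erase u) B := by
  ext F
  simp only [complexDel, deltaAB, Set.mem_setOf_eq]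
  constructor
  · rintro ⟨hx, hsub, hind⟩
    refine ⟨?_, hind⟩
    intro a ha
    rcases a with a | a
    · have : a ∈ A := Finset.inl_mem_disjSum.mp (hsub ha)
      refine Finset.inl_mem_disjSum.mpr (Finset.mem_erase.mpr ⟨?_, this⟩)
      rintro rfl; exact hx ha
    · exact Finset.inr_mem_disjSum.mpr (Finset.inr_mem_disjSum.mp (hsub ha))
  · rintro ⟨hsub, hind⟩
    refine ⟨?_, ?_, hind⟩
    · intro hmem
      exact (Finset.mem_erase.mp (Finset.inl_mem_disjSum.mp (hsub hmem))).1 rfl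
    · intro a ha
      rcases a with a | a
      · exact Finset.inl_mem_disjSum.mpr
          (Finset.mem_erase.mp (Finset.inl_mem_disjSum.mp (hsub ha))).2
      · exact Finset.inr_mem_disjSum.mpr (Finset.inr_mem_disjSum.mp (hsub ha))

lemma deltaAB_link (G : SimpleGraph V) (p : V → Fin r) (A : Finset V)
    (B : Finset (Fin r)) (u : V) (hu : u ∈ A) (hpu : p u ∈ B) :
    complexLink (deltaAB G p A B) (Sum.inl u)
      = deltaAB G p (A.filter (fun v => ¬ G.Adj u v ∧ v ≠ u)) (B.erase (p u)) := by
  ext F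
  simp only [complexLink, deltaAB, Set.mem_setOf_eq]
  constructor
  · rintro ⟨hx, hsub, hind⟩
    have hindF : IsIndep (cliqueWhisker G p) (↑F : Set (V ⊕ Fin r)) :=
      isIndep_subset (fun a ha => Finset.mem_coe.mpr
        (Finset.mem_insert_of_mem (Finset.mem_coe.mp ha))) hind
    refine ⟨?_, hindF⟩
    intro a ha
    have haA : a ∈ A.disjSum B := hsub (Finset.mem_insert_of_mem ha)
    rcases a with a | a
    · refine Finset.inl_mem_disjSum.mpr (Finset.mem_filter.mpr
        ⟨Finset.inl_mem_disjSum.mp haA, ?_, ?_⟩)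
      · intro hadj
        exact hind (Sum.inl u) (Finset.mem_insert_self _ _) (Sum.inl a)
          (Finset.mem_insert_of_mem ha) ((cw_adj_inl_inl G p u a).mpr hadj)
      · rintro rfl; exact hx ha
    · refine Finset.inr_mem_disjSum.mpr (Finset.mem_erase.mpr
        ⟨?_, Finset.inr_mem_disjSum.mp haA⟩)
      rintro rfl
      exact hind (Sum.inl u) (Finset.mem_insert_self _ _) (Sum.inr (p u))
        (Finset.mem_insert_of_mem ha) ((cw_adj_inl_inr G p u (p u)).mpr rfl)
  · rintro ⟨hsub, hind⟩
    have hx : Sum.inl u ∉ F := by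
      intro hmem
      have := Finset.mem_filter.mp (Finset.inl_mem_disjSum.mp (hsub hmem))
      exact this.2.2 rfl
    refine ⟨hx, ?_, ?_⟩
    · intro a ha
      rcases Finset.mem_insert.mp ha with rfl | ha
      · exact Finset.inl_mem_disjSum.mpr hu
      rcases a with a | a
      · exact Finset.inl_mem_disjSum.mpr
          (Finset.mem_filter.mp (Finset.inl_mem_disjSum.mp (hsub ha))).1
      · exact Finset.inr_mem_disjSum.mpr
          (Finset.mem_erase.mp (Finset.inr_mem_disjSum.mp (hsub ha))).2
    · intro a ha b hb hadj
      rcases Finset.mem_insert.mp ha with rfl | haF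
      · rcases Finset.mem_insert.mp hb with rfl | hbF
        · exact (cliqueWhisker G p).loopless.irrefl _ hadj
        rcases b with b | b
        · exact (Finset.mem_filter.mp (Finset.inl_mem_disjSum.mp (hsub hbF))).2.1
            ((cw_adj_inl_inl G p u b).mp hadj)
        · exact (Finset.mem_erase.mp (Finset.inr_mem_disjSum.mp (hsub hbF))).1
            ((cw_adj_inl_inr G p u b).mp hadj).symm
      rcases Finset.mem_insert.mp hb with rfl | hbF
      · rcases a with a | a
        · exact (Finset.mem_filter.mp (Finset.inl_mem_disjSum.mp (hsub haF))).2.1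
            ((cw_adj_inl_inl G p u a).mp hadj.symm)
        · exact (Finset.mem_erase.mp (Finset.inr_mem_disjSum.mp (hsub haF))).1
            ((cw_adj_inl_inr G p u a).mp hadj.symm).symm
      · exact hind a haF b hbF hadj

lemma deltaAB_facet (G : SimpleGraph V) (p : V → Fin r)
    (hclique : ∀ u v : V, p u = p v → u ≠ v → G.Adj u v)
    (A : Finset V) (B : Finset (Fin r)) (u : V) (hu : u ∈ A) (hpu : p u ∈ B)
    (F : Finset (V ⊕ Fin r)) (hF : IsFacet (deltaAB G p (A.erase u) B) F) :
    IsFacet (deltaAB G p A B) F := by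
  obtain ⟨⟨hsub, hind⟩, hmax⟩ := hF
  have hAsub : ∀ K : Finset (V ⊕ Fin r), K ⊆ (A.erase u).disjSum B → K ⊆ A.disjSum B := by
    intro K hK a ha
    rcases a with a | a
    · exact Finset.inl_mem_disjSum.mpr
        (Finset.mem_erase.mp (Finset.inl_mem_disjSum.mp (hK ha))).2
    · exact Finset.inr_mem_disjSum.mpr (Finset.inr_mem_disjSum.mp (hK ha))
  -- insert (inl u) F is not independent
  have hdep : ¬ IsIndep (cliqueWhisker G p)
      (↑(insert (Sum.inl u) F) : Set (V ⊕ Fin r)) := by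
    intro hI
    by_cases hpuF : Sum.inr (p u) ∈ F
    · exact hI (Sum.inl u) (Finset.mem_insert_self _ _) (Sum.inr (p u))
        (Finset.mem_insert_of_mem hpuF) ((cw_adj_inl_inr G p u (p u)).mpr rfl)
    · -- F ∪ {inr (p u)} is a face of the deleted complex containing F
      have hF' : insert (Sum.inr (p u)) F ∈ deltaAB G p (A.erase u) B := by
        refine ⟨?_, ?_⟩
        · intro a ha
          rcases Finset.mem_insert.mp ha with rfl | ha
          · exact Finset.inr_mem_disjSum.mpr hpu
          · exact hsub ha
        · intro a ha b hb hadj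
          rcases Finset.mem_insert.mp ha with rfl | haF
          · rcases Finset.mem_insert.mp hb with rfl | hbF
            · exact (cliqueWhisker G p).loopless.irrefl _ hadj
            rcases b with b | b
            · -- inr (p u) adjacent to inl b : p b = p u, b ≠ u; get G.Adj u b
              have hpb : p b = p u := (cw_adj_inl_inr G p b (p u)).mp hadj.symm
              have hbA : b ∈ A.erase u := Finset.mem_erase.mp
                (Finset.inl_mem_disjSum.mp (hsub hbF)) |>.2 |> fun h =>
                  Finset.mem_erase.mpr ⟨(Finset.mem_erase.mp
                    (Finset.inl_mem_disjSum.mp (hsub hbF))).1, h⟩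
              have hne : u ≠ b := Ne.symm (Finset.mem_erase.mp
                (Finset.inl_mem_disjSum.mp (hsub hbF))).1
              have hGadj : G.Adj u b := hclique u b hpb.symm hne
              exact hI (Sum.inl u) (Finset.mem_insert_self _ _) (Sum.inl b)
                (Finset.mem_insert_of_mem hbF) ((cw_adj_inl_inl G p u b).mpr hGadj)
            · exact cw_not_adj_inr_inr G p _ _ hadj
          rcases Finset.mem_insert.mp hb with rfl | hbF
          · rcases a with a | a
            · have hpa : p a = p u := (cw_adj_inl_inr G p a (p u)).mp hadj
              have hne : u ≠ a := Ne.symm (Finset.mem_erase.mp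
                (Finset.inl_mem_disjSum.mp (hsub haF))).1
              have hGadj : G.Adj u a := hclique u a hpa.symm hne
              exact hI (Sum.inl u) (Finset.mem_insert_self _ _) (Sum.inl a)
                (Finset.mem_insert_of_mem haF) ((cw_adj_inl_inl G p u a).mpr hGadj)
            · exact cw_not_adj_inr_inr G p _ _ hadj
          · exact hind a haF b hbF hadj
      have := hmax _ hF' (Finset.subset_insert _ _)
      exact hpuF (this ▸ Finset.mem_insert_self _ _)
  refine ⟨⟨hAsub F hsub, hind⟩, ?_⟩
  rintro K ⟨hKsub, hKind⟩ hFK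
  have hxK : Sum.inl u ∉ K := by
    intro hmem
    apply hdep
    refine isIndep_subset ?_ hKind
    intro a ha
    rcases Finset.mem_insert.mp (Finset.mem_coe.mp ha) with rfl | ha
    · exact hmem
    · exact hFK ha
  refine hmax K ⟨?_, hKind⟩ hFK
  intro a ha
  rcases a with a | a
  · refine Finset.inl_mem_disjSum.mpr (Finset.mem_erase.mpr
      ⟨?_, Finset.inl_mem_disjSum.mp (hKsub ha)⟩)
    rintro rfl; exact hxK ha
  · exact Finset.inr_mem_disjSum.mpr (Finset.inr_mem_disjSum.mp (hKsub ha))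

lemma deltaAB_vd (G : SimpleGraph V) (p : V → Fin r)
    (hclique : ∀ u v : V, p u = p v → u ≠ v → G.Adj u v) :
    ∀ (n : ℕ) (A : Finset V) (B : Finset (Fin r)), A.card ≤ n →
      (∀ v ∈ A, p v ∈ B) → VertexDecomposable (deltaAB G p A B) := by
  intro n
  induction n with
  | zero =>
    intro A B hA hinv
    have : A = ∅ := Finset.card_eq_zero.mp (Nat.le_zero.mp hA)
    subst this
    rw [deltaAB_empty]
    exact VertexDecomposable.simplex _
  | succ n ih =>
    intro A B hA hinv
    rcases Finset.eq_empty_or_nonempty A with rfl | ⟨u, hu⟩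
    · rw [deltaAB_empty]
      exact VertexDecomposable.simplex _
    have hpu : p u ∈ B := hinv u hu
    refine VertexDecomposable.step _ (Sum.inl u) ?_ ?_ ?_
    · rw [deltaAB_link G p A B u hu hpu]
      refine ih _ _ ?_ ?_
      · calc (A.filter (fun v => ¬ G.Adj u v ∧ v ≠ u)).card
            ≤ (A.erase u).card := Finset.card_le_card (by
              intro v hv
              have := Finset.mem_filter.mp hv
              exact Finset.mem_erase.mpr ⟨this.2.2, this.1⟩)
          _ ≤ n := by
              rw [Finset.card_erase_of_mem hu]
              omega
      · intro v hv
        have hvf := Finset.mem_filter.mp hv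
        refine Finset.mem_erase.mpr ⟨?_, hinv v hvf.1⟩
        intro hpev
        exact hvf.2.1 (hclique u v hpev.symm (Ne.symm hvf.2.2))
    · rw [deltaAB_del]
      refine ih _ _ ?_ ?_
      · rw [Finset.card_erase_of_mem hu]; omega
      · intro v hv
        exact hinv v (Finset.mem_erase.mp hv).2
    · intro F hF
      rw [deltaAB_del] at hF
      exact deltaAB_facet G p hclique A B u hu hpu F hF

end Aux

theorem stmt6 {V : Type*} [Fintype V] [DecidableEq V] {r : ℕ}
    (G : SimpleGraph V) (p : V → Fin r)
    (hclique : ∀ u v : V, p u = p v → u ≠ v → G.Adj u v)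
    (hsurj : Function.Surjective p) :
    VertexDecomposable (indepComplex (cliqueWhisker G p)) := by
  have hall : indepComplex (cliqueWhisker G p) = deltaAB G p Finset.univ Finset.univ := by
    ext F
    simp only [indepComplex, deltaAB, Set.mem_setOf_eq, and_iff_right_iff_imp,
      iff_and_self]
    intro _ a _
    rcases a with a | a
    · exact Finset.inl_mem_disjSum.mpr (Finset.mem_univ a)
    · exact Finset.inr_mem_disjSum.mpr (Finset.mem_univ a)
  rw [hall]
  exact deltaAB_vd G p hclique Finset.univ.card Finset.univ Finset.univ le_rfl
    (fun v _ => Finset.mem_univ _)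
end

section
/- Let G be a Cohen–Macaulay chordal graph (over some field) with maximal cliques F₁,…,F_m having a free vertex, and let wᵢ be a free vertex of Fᵢ. Assume V(G) is the disjoint union of F₁,…,F_m. Then G equals the clique-whiskered graph (G − {w₁,…,w_m})^π, where π = {Fᵢ \ {wᵢ} : 1 ≤ i ≤ m}. -/
theorem stmt8 {V : Type*} [Fintype V] [DecidableEq V] {m : ℕ}
    (G : SimpleGraph V) (F : Fin m → Set V) (w : Fin m → V) (p : V → Fin m)
    (hpart : ∀ (v : V) (i : Fin m), v ∈ F i ↔ p v = i)
    (hclique : ∀ i, ∀ u ∈ F i, ∀ v ∈ F i, u ≠ v → G.Adj u v)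
    (hfree : ∀ (i : Fin m) (v : V), v ∈ F i ↔ (G.Adj (w i) v ∨ v = w i)) :
    Function.Bijective
      (Sum.elim Subtype.val w : ↥{v : V | ∀ i, v ≠ w i} ⊕ Fin m → V) ∧
    ∀ a b : ↥{v : V | ∀ i, v ≠ w i} ⊕ Fin m,
      (cliqueWhisker (SimpleGraph.induce {v : V | ∀ i, v ≠ w i} G)
          (fun v => p v.1)).Adj a b ↔
        G.Adj (Sum.elim Subtype.val w a) (Sum.elim Subtype.val w b) := by
  have hw : ∀ i, w i ∈ F i := fun i => (hfree i (w i)).2 (Or.inr rfl)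
  have hpw : ∀ i, p (w i) = i := fun i => (hpart _ _).1 (hw i)
  have hwnadj : ∀ i j, ¬ G.Adj (w i) (w j) := by
    intro i j hadj
    have h1 : w j ∈ F i := (hfree i (w j)).2 (Or.inl hadj)
    have : i = j := ((hpart _ _).1 h1).symm.trans (hpw j)
    subst this
    exact G.irrefl hadj
  have hadj_iff : ∀ (i : Fin m) (u : V), u ≠ w i → (p u = i ↔ G.Adj u (w i)) := by
    intro i u hu
    constructor
    · intro h
      have : u ∈ F i := (hpart u i).2 h
      rcases (hfree i u).1 this with h' | h'
      · exact h'.symm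
      · exact absurd h' hu
    · intro h
      exact (hpart u i).1 ((hfree i u).2 (Or.inl h.symm))
  constructor
  · constructor
    · rintro (⟨u, hu⟩ | i) (⟨v, hv⟩ | j) h
      · simp only [Sum.elim_inl] at h; simp [h]
      · exact absurd h (hu j)
      · exact absurd h.symm (hv i)
      · simp only [Sum.elim_inr] at h
        have : i = j := ((hpw i).symm.trans (by rw [h]; exact hpw j))
        simp [this]
    · intro v
      by_cases h : ∀ i, v ≠ w i
      · exact ⟨Sum.inl ⟨v, h⟩, rfl⟩
      · push_neg at h
        obtain ⟨i, hi⟩ := h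
        exact ⟨Sum.inr i, hi.symm⟩
  · rintro (⟨u, hu⟩ | i) (⟨v, hv⟩ | j) <;>
      simp only [cliqueWhisker, SimpleGraph.fromRel_adj, SimpleGraph.comap_adj,
        Function.Embedding.coe_subtype, Sum.elim_inl, Sum.elim_inr, ne_eq,
        Sum.inl.injEq, Sum.inr.injEq, Subtype.mk.injEq]
    · constructor
      · rintro ⟨-, h | h⟩
        · exact h
        · exact h.symm
      · intro h
        exact ⟨fun he => G.irrefl (he ▸ h), Or.inl h⟩
    · constructor
      · rintro ⟨-, h | h⟩
        · exact (hadj_iff j u (hu j)).1 h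
        · exact absurd h (fun h => h)
      · intro h
        exact ⟨fun he => (by cases he), Or.inl ((hadj_iff j u (hu j)).2 h)⟩
    · constructor
      · rintro ⟨-, h | h⟩
        · exact absurd h (fun h => h)
        · exact ((hadj_iff i v (hv i)).1 h).symm
      · intro h
        exact ⟨fun he => (by cases he), Or.inr ((hadj_iff i v (hv i)).2 h.symm)⟩
    · constructor
      · rintro ⟨-, h | h⟩ <;> exact absurd h (fun h => h)
      · intro h
        exact absurd h (hwnadj i j)
end

section
/- Let G be a finite simple graph with clique partition π = {W₁,…,W_r}, and let C be a minimal vertex cover of the clique-whiskered graph G^π. Then V(G) \ C is an independent set of G, and hence |V(G) \ C| ≤ im(G^π), the induced matching number of G^π. -/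
def IsInducedMatching {V : Type*} (G : SimpleGraph V) (M : Finset (Sym2 V)) : Prop :=
  (↑M : Set (Sym2 V)) ⊆ G.edgeSet ∧
    ∀ e ∈ M, ∀ f ∈ M, e ≠ f → ∀ u ∈ e, ∀ v ∈ f, u ≠ v ∧ ¬ G.Adj u v

noncomputable def inducedMatchingNumber {V : Type*} [Fintype V] (G : SimpleGraph V) : ℕ :=
  sSup {n | ∃ M : Finset (Sym2 V), IsInducedMatching G M ∧ M.card = n}

theorem stmt10 {V : Type*} [Fintype V] {r : ℕ} (G : SimpleGraph V) (p : V → Fin r)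
    (hclique : ∀ u v : V, p u = p v → u ≠ v → G.Adj u v)
    (hsurj : Function.Surjective p)
    (C : Set (V ⊕ Fin r)) (hC : IsMinVertexCover (cliqueWhisker G p) C) :
    IsIndep G {v : V | Sum.inl v ∉ C} ∧
      Set.ncard {v : V | Sum.inl v ∉ C} ≤
        inducedMatchingNumber (cliqueWhisker G p) := by
  classical
  have cover : IsVertexCover (cliqueWhisker G p) C := hC.1
  have hll : ∀ u v : V, (cliqueWhisker G p).Adj (Sum.inl u) (Sum.inl v) ↔ G.Adj u v := by
    intro u v
    constructor
    · intro h
      rcases (SimpleGraph.fromRel_adj ..).1 h with ⟨-, h1 | h1⟩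
      · exact h1
      · exact h1.symm
    · intro h
      exact (SimpleGraph.fromRel_adj ..).2 ⟨by simp [h.ne], Or.inl h⟩
  have hlr : ∀ (u : V) (i : Fin r),
      (cliqueWhisker G p).Adj (Sum.inl u) (Sum.inr i) ↔ p u = i := by
    intro u i
    constructor
    · intro h
      rcases (SimpleGraph.fromRel_adj ..).1 h with ⟨-, h1 | h1⟩
      · exact h1
      · exact h1.elim
    · intro h
      exact (SimpleGraph.fromRel_adj ..).2 ⟨by simp, Or.inl h⟩
  have hrr : ∀ i j : Fin r, ¬ (cliqueWhisker G p).Adj (Sum.inr i) (Sum.inr j) := by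
    intro i j h
    rcases (SimpleGraph.fromRel_adj ..).1 h with ⟨-, h1 | h1⟩ <;> exact h1
  have hindep : IsIndep G {v : V | Sum.inl v ∉ C} := by
    intro u hu v hv huv
    rcases cover ((hll u v).2 huv) with h | h
    · exact hu h
    · exact hv h
  refine ⟨hindep, ?_⟩
  have hpinj : ∀ u v : V, Sum.inl u ∉ C → Sum.inl v ∉ C → p u = p v → u = v := by
    intro u v hu hv hpe
    by_contra hne
    exact hindep u hu v hv (hclique u v hpe hne)
  set S : Finset V := Finset.univ.filter (fun v => Sum.inl v ∉ C) with hS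
  set M : Finset (Sym2 (V ⊕ Fin r)) :=
    S.image (fun v => s(Sum.inl v, Sum.inr (p v))) with hM
  have hmemS : ∀ v, v ∈ S ↔ Sum.inl v ∉ C := by intro v; simp [hS]
  have hedge : ∀ v : V, (cliqueWhisker G p).Adj (Sum.inl v) (Sum.inr (p v)) :=
    fun v => (hlr v (p v)).2 rfl
  have hIM : IsInducedMatching (cliqueWhisker G p) M := by
    constructor
    · intro e he
      simp only [hM, Finset.coe_image, Set.mem_image, Finset.mem_coe] at he
      obtain ⟨v, _, rfl⟩ := he
      exact hedge v
    · intro e he f hf hef u hu v hv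
      simp only [hM, Finset.mem_image] at he hf
      obtain ⟨a, ha, rfl⟩ := he
      obtain ⟨b, hb, rfl⟩ := hf
      rw [hmemS] at ha hb
      have hab : a ≠ b := by rintro rfl; exact hef rfl
      have hpab : p a ≠ p b := fun h => hab (hpinj a b ha hb h)
      rw [Sym2.mem_iff] at hu hv
      rcases hu with rfl | rfl <;> rcases hv with rfl | rfl
      · exact ⟨by simp [hab], fun h => hindep a ha b hb ((hll a b).1 h)⟩
      · exact ⟨by simp, fun h => hpab ((hlr a (p b)).1 h)⟩
      · exact ⟨by simp, fun h => hpab (((hlr b (p a)).1 h.symm).symm)⟩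
      · exact ⟨by simp [hpab], fun h => hrr _ _ h⟩
  have hcard : M.card = S.card := by
    rw [hM]
    apply Finset.card_image_of_injOn
    intro a ha b hb h
    rw [Sym2.eq_iff] at h
    rcases h with ⟨h1, _⟩ | ⟨h1, _⟩
    · exact Sum.inl.inj h1
    · exact absurd h1 (by simp)
  have hncard : Set.ncard {v : V | Sum.inl v ∉ C} = S.card := by
    rw [Set.ncard_eq_toFinset_card']
    congr 1
    ext v
    simp [hS]
  rw [hncard, ← hcard]
  apply le_csSup
  · refine ⟨Fintype.card (Sym2 (V ⊕ Fin r)), ?_⟩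
    rintro n ⟨N, _, rfl⟩
    exact N.card_le_univ.trans_eq rfl
  · exact ⟨M, hIM, rfl⟩
end

section
/- Let G be a finite simple graph with clique partition π = {W₁,…,W_r} and let D be an independent set of the clique-whiskered graph G^π contained in V(G). Then the set of edges {{x, w_{i(x)}} : x ∈ D}, where i(x) is the index with x ∈ W_{i(x)}, is an induced matching of G^π of size |D|. -/
lemma cw_ll {V ι : Type*} {G : SimpleGraph V} {p : V → ι} {u v : V} :
    (cliqueWhisker G p).Adj (Sum.inl u) (Sum.inl v) ↔ G.Adj u v := by
  simp only [cliqueWhisker, SimpleGraph.fromRel_adj]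
  constructor
  · rintro ⟨h, h1 | h1⟩ <;> [exact h1; exact h1.symm]
  · intro h; exact ⟨by simp [h.ne], Or.inl h⟩

lemma cw_lr {V ι : Type*} {G : SimpleGraph V} {p : V → ι} {u : V} {i : ι} :
    (cliqueWhisker G p).Adj (Sum.inl u) (Sum.inr i) ↔ p u = i := by
  simp [cliqueWhisker, SimpleGraph.fromRel_adj]

lemma cw_rr {V ι : Type*} {G : SimpleGraph V} {p : V → ι} {i j : ι} :
    ¬ (cliqueWhisker G p).Adj (Sum.inr i) (Sum.inr j) := by
  simp [cliqueWhisker, SimpleGraph.fromRel_adj]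

theorem stmt11 {V : Type*} [Fintype V] [DecidableEq V] {r : ℕ}
    (G : SimpleGraph V) (p : V → Fin r)
    (hclique : ∀ u v : V, p u = p v → u ≠ v → G.Adj u v)
    (hsurj : Function.Surjective p)
    (D : Finset V)
    (hD : IsIndep (cliqueWhisker G p) (Sum.inl '' (↑D : Set V))) :
    IsInducedMatching (cliqueWhisker G p)
        (D.image (fun x => s(Sum.inl x, (Sum.inr (p x) : V ⊕ Fin r)))) ∧
      (D.image (fun x => s(Sum.inl x, (Sum.inr (p x) : V ⊕ Fin r)))).card = D.card := by
  have hGind : ∀ x ∈ D, ∀ y ∈ D, ¬ G.Adj x y := by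
    intro x hx y hy h
    exact hD (Sum.inl x) ⟨x, hx, rfl⟩ (Sum.inl y) ⟨y, hy, rfl⟩ (cw_ll.mpr h)
  refine ⟨⟨?_, ?_⟩, ?_⟩
  · intro e he
    simp only [Finset.coe_image, Set.mem_image, Finset.mem_coe] at he
    obtain ⟨x, hx, rfl⟩ := he
    rw [SimpleGraph.mem_edgeSet]
    exact cw_lr.mpr rfl
  · intro e he f hf hef u hu v hv
    simp only [Finset.mem_image] at he hf
    obtain ⟨x, hx, rfl⟩ := he
    obtain ⟨y, hy, rfl⟩ := hf
    have hxy : x ≠ y := by rintro rfl; exact hef rfl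
    have hpxy : p x ≠ p y := by
      intro h; exact hGind x hx y hy (hclique x y h hxy)
    rw [Sym2.mem_iff] at hu hv
    rcases hu with rfl | rfl <;> rcases hv with rfl | rfl
    · exact ⟨by simp [hxy], fun h => hGind x hx y hy (cw_ll.mp h)⟩
    · exact ⟨by simp, fun h => hpxy (cw_lr.mp h)⟩
    · exact ⟨by simp, fun h => hpxy (cw_lr.mp h.symm).symm⟩
    · exact ⟨by simp [hpxy], cw_rr⟩
  · apply Finset.card_image_of_injOn
    intro x _ y _ h
    simp only [Sym2.eq, Sym2.rel_iff', Prod.mk.injEq, Prod.swap_prod_mk] at h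
    rcases h with ⟨h, _⟩ | ⟨h, _⟩ <;> simp_all
end

section
/- Let G be a finite simple graph with clique partition π = {W₁,…,W_r}, let G^π be the clique-whiskered graph and W(G) the whisker graph of G. For a minimal vertex cover C of G^π, define C' = (C \ {w₁,…,w_r}) ∪ {y_{i,j} : wᵢ ∈ C and x_{i,j} ∈ Wᵢ \ C}, where y_{i,j} is the pendant attached to x_{i,j} in W(G). Then C' is a minimal vertex cover of W(G), and V(G) \ C = {x ∈ V(G) : the pendant of x lies in C'}. -/
theorem stmt12 {V : Type*} [Fintype V] {r : ℕ} (G : SimpleGraph V) (p : V → Fin r)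
    (hclique : ∀ u v : V, p u = p v → u ≠ v → G.Adj u v)
    (hsurj : Function.Surjective p)
    (C : Set (V ⊕ Fin r)) (hC : IsMinVertexCover (cliqueWhisker G p) C) :
    IsMinVertexCover (whiskerGraph G)
        ((Sum.inl '' {v : V | Sum.inl v ∈ C}) ∪
          (Sum.inr '' {v : V | Sum.inr (p v) ∈ C ∧ Sum.inl v ∉ C})) ∧
      {v : V | Sum.inl v ∉ C} =
        {v : V | (Sum.inr v : V ⊕ V) ∈
          (Sum.inl '' {v : V | Sum.inl v ∈ C}) ∪
            (Sum.inr '' {v : V | Sum.inr (p v) ∈ C ∧ Sum.inl v ∉ C})} := by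
  obtain ⟨hcov, hmin⟩ := hC
  set C' : Set (V ⊕ V) :=
    (Sum.inl '' {v : V | Sum.inl v ∈ C}) ∪
      (Sum.inr '' {v : V | Sum.inr (p v) ∈ C ∧ Sum.inl v ∉ C}) with hC'
  have hC'l : ∀ v : V, (Sum.inl v : V ⊕ V) ∈ C' ↔ Sum.inl v ∈ C := by
    intro v; simp [hC']
  have hC'r : ∀ v : V, (Sum.inr v : V ⊕ V) ∈ C' ↔ (Sum.inr (p v) ∈ C ∧ Sum.inl v ∉ C) := by
    intro v; simp [hC']
  have hpendadj : ∀ v : V, (cliqueWhisker G p).Adj (Sum.inl v) (Sum.inr (p v)) := by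
    intro v; simp [cliqueWhisker, SimpleGraph.fromRel_adj]
  have hpend : ∀ v : V, Sum.inl v ∉ C → Sum.inr (p v) ∈ C := by
    intro v hv
    rcases hcov (hpendadj v) with h | h
    · exact absurd h hv
    · exact h
  have hkey : ∀ x ∈ C, ∃ z, (cliqueWhisker G p).Adj x z ∧ z ∉ C := by
    intro x hx
    by_contra h
    push_neg at h
    have hDcov : IsVertexCover (cliqueWhisker G p) (C \ {x}) := by
      intro u v huv
      rcases hcov huv with hu | hv
      · by_cases hux : u = x
        · subst hux
          exact Or.inr ⟨h v huv, fun hvx => (cliqueWhisker G p).irrefl (hvx ▸ huv)⟩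
        · exact Or.inl ⟨hu, hux⟩
      · by_cases hvx : v = x
        · subst hvx
          exact Or.inl ⟨h u huv.symm, fun hux => (cliqueWhisker G p).irrefl (hux ▸ huv)⟩
        · exact Or.inr ⟨hv, hvx⟩
    have heq := hmin _ Set.diff_subset hDcov
    have hnot : x ∉ C \ {x} := fun h' => h'.2 rfl
    rw [heq] at hnot
    exact hnot hx
  have hwadj_ll : ∀ u v : V, (whiskerGraph G).Adj (Sum.inl u) (Sum.inl v) ↔ G.Adj u v := by
    intro u v
    constructor
    · intro h
      rw [whiskerGraph, SimpleGraph.fromRel_adj] at h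
      rcases h.2 with h' | h'
      · exact h'
      · exact h'.symm
    · intro h
      rw [whiskerGraph, SimpleGraph.fromRel_adj]
      exact ⟨by simp [h.ne], Or.inl h⟩
  have hwadj_pend : ∀ v : V, (whiskerGraph G).Adj (Sum.inl v) (Sum.inr v) := by
    intro v; simp [whiskerGraph, SimpleGraph.fromRel_adj]
  have hcadj_ll : ∀ u v : V, (cliqueWhisker G p).Adj (Sum.inl u) (Sum.inl v) → G.Adj u v := by
    intro u v h
    rw [cliqueWhisker, SimpleGraph.fromRel_adj] at h
    rcases h.2 with h' | h'
    · exact h'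
    · exact h'.symm
  have hcadj_lr : ∀ (v : V) (i : Fin r),
      (cliqueWhisker G p).Adj (Sum.inl v) (Sum.inr i) → p v = i := by
    intro v i h
    rw [cliqueWhisker, SimpleGraph.fromRel_adj] at h
    rcases h.2 with h' | h'
    · exact h'
    · exact h'.elim
  have hcover : IsVertexCover (whiskerGraph G) C' := by
    intro u v huv
    match u, v with
    | Sum.inl u, Sum.inl v =>
      have hadj : (cliqueWhisker G p).Adj (Sum.inl u) (Sum.inl v) := by
        rw [cliqueWhisker, SimpleGraph.fromRel_adj]
        exact ⟨by simp [((hwadj_ll u v).1 huv).ne], Or.inl ((hwadj_ll u v).1 huv)⟩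
      rcases hcov hadj with h | h
      · exact Or.inl ((hC'l u).2 h)
      · exact Or.inr ((hC'l v).2 h)
    | Sum.inl u, Sum.inr v =>
      have huv' : u = v := by
        rw [whiskerGraph, SimpleGraph.fromRel_adj] at huv
        rcases huv.2 with h' | h'
        · exact h'
        · exact h'.elim
      subst huv'
      by_cases h : Sum.inl u ∈ C
      · exact Or.inl ((hC'l u).2 h)
      · exact Or.inr ((hC'r u).2 ⟨hpend u h, h⟩)
    | Sum.inr u, Sum.inl v =>
      have huv' : v = u := by
        rw [whiskerGraph, SimpleGraph.fromRel_adj] at huv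
        rcases huv.2 with h' | h'
        · exact h'.elim
        · exact h'
      subst huv'
      by_cases h : Sum.inl v ∈ C
      · exact Or.inr ((hC'l v).2 h)
      · exact Or.inl ((hC'r v).2 ⟨hpend v h, h⟩)
    | Sum.inr u, Sum.inr v =>
      exfalso
      rw [whiskerGraph, SimpleGraph.fromRel_adj] at huv
      rcases huv.2 with h' | h' <;> exact h'
  refine ⟨⟨hcover, ?_⟩, ?_⟩
  · intro D hD hDcov
    apply Set.Subset.antisymm hD
    intro x hx
    match x with
    | Sum.inl v =>
      have hvC : Sum.inl v ∈ C := (hC'l v).1 hx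
      obtain ⟨z, hadj, hz⟩ := hkey _ hvC
      match z with
      | Sum.inl u =>
        have hGadj : G.Adj v u := hcadj_ll v u hadj
        rcases hDcov ((hwadj_ll v u).2 hGadj) with h | h
        · exact h
        · exact absurd ((hC'l u).1 (hD h)) hz
      | Sum.inr i =>
        have hpi : p v = i := hcadj_lr v i hadj
        subst hpi
        rcases hDcov (hwadj_pend v) with h | h
        · exact h
        · exact absurd ((hC'r v).1 (hD h)).1 hz
    | Sum.inr v =>
      obtain ⟨h1, h2⟩ := (hC'r v).1 hx
      rcases hDcov (hwadj_pend v) with h | h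
      · exact absurd ((hC'l v).1 (hD h)) h2
      · exact h
  · ext v
    simp only [Set.mem_setOf_eq]
    rw [hC'r v]
    constructor
    · intro h
      exact ⟨hpend v h, h⟩
    · intro h
      exact h.2
end

section
/- Let G be a Cameron–Walker graph which is Cohen–Macaulay; i.e., G consists of a connected bipartite graph with vertex partition {x₁,…,x_n} ∪ {y₁,…,y_m} together with exactly one leaf edge {xᵢ, wᵢ} attached to each xᵢ and exactly one pendant triangle {yⱼ, zⱼ, w_{n+j}} attached to each yⱼ. Then G equals the clique-whiskered graph (G|_{V(G_bip) ∪ {z₁,…,z_m}})^π, where π = {{xᵢ} : 1 ≤ i ≤ n} ∪ {{yⱼ, zⱼ} : 1 ≤ j ≤ m}. -/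
def cwGraph (n m : ℕ) (B : SimpleGraph (Fin n ⊕ Fin m)) :
    SimpleGraph ((Fin n ⊕ Fin m) ⊕ (Fin m ⊕ (Fin n ⊕ Fin m))) :=
  SimpleGraph.fromRel (fun a b =>
    match a, b with
    | Sum.inl a, Sum.inl b => B.Adj a b
    | Sum.inl (Sum.inr j), Sum.inr (Sum.inl j') => j = j'
    | Sum.inl (Sum.inl i), Sum.inr (Sum.inr (Sum.inl i')) => i = i'
    | Sum.inl (Sum.inr j), Sum.inr (Sum.inr (Sum.inr j')) => j = j'
    | Sum.inr (Sum.inl j), Sum.inr (Sum.inr (Sum.inr j')) => j = j'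
    | _, _ => False)

def cwS (n m : ℕ) : Set ((Fin n ⊕ Fin m) ⊕ (Fin m ⊕ (Fin n ⊕ Fin m))) :=
  {a | ∀ c, a ≠ Sum.inr (Sum.inr c)}

def cwP (n m : ℕ) (a : ↥(cwS n m)) : Fin n ⊕ Fin m :=
  match a.1 with
  | Sum.inl c => c
  | Sum.inr (Sum.inl j) => Sum.inr j
  | Sum.inr (Sum.inr c) => c

def cwEmb (n m : ℕ) :
    ↥(cwS n m) ⊕ (Fin n ⊕ Fin m) → (Fin n ⊕ Fin m) ⊕ (Fin m ⊕ (Fin n ⊕ Fin m)) :=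
  Sum.elim Subtype.val (fun c => Sum.inr (Sum.inr c))

theorem stmt13 (n m : ℕ) (B : SimpleGraph (Fin n ⊕ Fin m))
    (hbip₁ : ∀ i j : Fin n, ¬ B.Adj (Sum.inl i) (Sum.inl j))
    (hbip₂ : ∀ i j : Fin m, ¬ B.Adj (Sum.inr i) (Sum.inr j))
    (hconn : B.Connected) :
    Function.Bijective (cwEmb n m) ∧
    ∀ a b : ↥(cwS n m) ⊕ (Fin n ⊕ Fin m),
      (cliqueWhisker (SimpleGraph.induce (cwS n m) (cwGraph n m B))
          (cwP n m)).Adj a b ↔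
        (cwGraph n m B).Adj (cwEmb n m a) (cwEmb n m b) := by
  constructor
  · constructor
    · rintro (⟨a, ha⟩ | a) (⟨b, hb⟩ | b) h
      · simp only [cwEmb, Sum.elim_inl] at h
        simp [h]
      · exact absurd h (ha b)
      · exact absurd h.symm (hb a)
      · simp only [cwEmb, Sum.elim_inr, Sum.inr.injEq] at h
        simp [h]
    · rintro ((c | c) | (j | c))
      · exact ⟨Sum.inl ⟨Sum.inl (Sum.inl c), by simp [cwS]⟩, rfl⟩
      · exact ⟨Sum.inl ⟨Sum.inl (Sum.inr c), by simp [cwS]⟩, rfl⟩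
      · exact ⟨Sum.inl ⟨Sum.inr (Sum.inl j), by simp [cwS]⟩, rfl⟩
      · exact ⟨Sum.inr c, rfl⟩
  · rintro (⟨((i | j) | (j | a)), ha⟩ | (i | j)) (⟨((i' | j') | (j' | b)), hb⟩ | (i' | j'))
    all_goals first
      | exact absurd rfl (ha _)
      | exact absurd rfl (hb _)
      | (simp only [cliqueWhisker, cwGraph, cwP, cwEmb, SimpleGraph.fromRel_adj,
           SimpleGraph.comap_adj, Function.Embedding.coe_subtype, Sum.elim_inl, Sum.elim_inr, Subtype.mk.injEq,
           ne_eq, Sum.inl.injEq, Sum.inr.injEq, Subtype.ext_iff]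
         try tauto)
end

section
/- Let G be a finite simple graph and let W(G) be its whisker graph, obtained by attaching a pendant vertex y_v to each vertex v ∈ V(G). Then the map C ↦ C ∩ V(G) is a bijection from the set of minimal vertex covers of W(G) to the set of vertex covers of G, with inverse sending a vertex cover D of G to D ∪ {y_v : v ∈ V(G) \ D}. In particular, the number of minimal vertex covers of W(G) equals the number of vertex covers of G, and every minimal vertex cover of W(G) has cardinality |V(G)|. -/
section Aux

variable {V : Type*} (G : SimpleGraph V)

lemma adj_ll (u v : V) :
    (whiskerGraph G).Adj (Sum.inl u) (Sum.inl v) ↔ G.Adj u v := by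
  constructor
  · rintro ⟨-, h | h⟩
    · exact h
    · exact h.symm
  · intro h; exact ⟨by simp [h.ne], Or.inl h⟩

lemma adj_lr (u w : V) :
    (whiskerGraph G).Adj (Sum.inl u) (Sum.inr w) ↔ u = w := by
  constructor
  · rintro ⟨-, h | h⟩
    · exact h
    · cases h
  · rintro rfl; exact ⟨by simp, Or.inl rfl⟩

lemma adj_rr (u w : V) : ¬ (whiskerGraph G).Adj (Sum.inr u) (Sum.inr w) := by
  rintro ⟨-, h | h⟩ <;> cases h

variable {G}

/-- Part 1 -/
lemma part1 {C : Set (V ⊕ V)} (hC : IsMinVertexCover (whiskerGraph G) C) :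
    IsVertexCover G {v : V | Sum.inl v ∈ C} := by
  intro u v huv
  exact hC.1 ((adj_ll G u v).2 huv)

/-- Part 2 -/
lemma part2 {D : Set V} (hD : IsVertexCover G D) :
    IsMinVertexCover (whiskerGraph G)
      ((Sum.inl '' D) ∪ (Sum.inr '' Dᶜ)) := by
  constructor
  · rintro (u | u) (v | v) h
    · rcases hD ((adj_ll G u v).1 h) with h' | h'
      · exact Or.inl (Or.inl ⟨u, h', rfl⟩)
      · exact Or.inr (Or.inl ⟨v, h', rfl⟩)
    · obtain rfl := (adj_lr G u v).1 h
      by_cases hu : u ∈ D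
      · exact Or.inl (Or.inl ⟨u, hu, rfl⟩)
      · exact Or.inr (Or.inr ⟨u, hu, rfl⟩)
    · obtain rfl := (adj_lr G v u).1 h.symm
      by_cases hv : v ∈ D
      · exact Or.inr (Or.inl ⟨v, hv, rfl⟩)
      · exact Or.inl (Or.inr ⟨v, hv, rfl⟩)
    · exact absurd h (adj_rr G u v)
  · intro E hE hEcov
    apply Set.Subset.antisymm hE
    rintro x (⟨u, hu, rfl⟩ | ⟨u, hu, rfl⟩)
    · rcases hEcov ((adj_lr G u u).2 rfl) with h | h
      · exact h
      · exfalso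
        rcases hE h with ⟨w, hw, hw'⟩ | ⟨w, hw, hw'⟩
        · cases hw'
        · obtain rfl : w = u := Sum.inr.inj hw'
          exact hw hu
    · rcases hEcov ((adj_lr G u u).2 rfl) with h | h
      · exfalso
        rcases hE h with ⟨w, hw, hw'⟩ | ⟨w, hw, hw'⟩
        · obtain rfl : w = u := Sum.inl.inj hw'
          exact hu hw
        · cases hw'
      · exact h

/-- Part 3 -/
lemma part3 {C : Set (V ⊕ V)} (hC : IsMinVertexCover (whiskerGraph G) C) :
    C = (Sum.inl '' {v : V | Sum.inl v ∈ C}) ∪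
      (Sum.inr '' {v : V | Sum.inl v ∈ C}ᶜ) := by
  have key : ∀ u : V, Sum.inr u ∈ C ↔ Sum.inl u ∉ C := by
    intro u
    constructor
    · intro hr hl
      -- C \ {inr u} is still a cover
      have hcov : IsVertexCover (whiskerGraph G) (C \ {Sum.inr u}) := by
        rintro (a | a) (b | b) h
        · rcases hC.1 h with h' | h'
          · exact Or.inl ⟨h', by simp⟩
          · exact Or.inr ⟨h', by simp⟩
        · obtain rfl := (adj_lr G a b).1 h
          by_cases hab : a = u
          · subst hab; exact Or.inl ⟨hl, by simp⟩
          · rcases hC.1 h with h' | h'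
            · exact Or.inl ⟨h', by simp⟩
            · exact Or.inr ⟨h', by simp [hab]⟩
        · obtain rfl := (adj_lr G b a).1 h.symm
          by_cases hab : b = u
          · subst hab; exact Or.inr ⟨hl, by simp⟩
          · rcases hC.1 h with h' | h'
            · exact Or.inl ⟨h', by simp [hab]⟩
            · exact Or.inr ⟨h', by simp⟩
        · exact absurd h (adj_rr G a b)
      have h2 := hC.2 _ Set.diff_subset hcov
      rw [← h2] at hr
      simp at hr
    · intro hl
      rcases hC.1 ((adj_lr G u u).2 rfl) with h | h
      · exact absurd h hl
      · exact h
  ext x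
  cases x with
  | inl u => simp
  | inr u => simp [key u]

lemma part3' {C : Set (V ⊕ V)} (hC : IsMinVertexCover (whiskerGraph G) C)
    {D : Set V} (hD : D = {v : V | Sum.inl v ∈ C}) :
    C = (Sum.inl '' D) ∪ (Sum.inr '' Dᶜ) := hD ▸ part3 hC

end Aux

theorem stmt18 {V : Type*} [Fintype V] (G : SimpleGraph V) :
    (∀ C : Set (V ⊕ V), IsMinVertexCover (whiskerGraph G) C →
        IsVertexCover G {v : V | Sum.inl v ∈ C}) ∧
    (∀ D : Set V, IsVertexCover G D →
        IsMinVertexCover (whiskerGraph G)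
          ((Sum.inl '' D) ∪ (Sum.inr '' Dᶜ))) ∧
    (∀ C : Set (V ⊕ V), IsMinVertexCover (whiskerGraph G) C →
        C = (Sum.inl '' {v : V | Sum.inl v ∈ C}) ∪
          (Sum.inr '' {v : V | Sum.inl v ∈ C}ᶜ)) ∧
    (∀ C : Set (V ⊕ V), IsMinVertexCover (whiskerGraph G) C →
        C.ncard = Fintype.card V) ∧
    Nat.card {C : Set (V ⊕ V) // IsMinVertexCover (whiskerGraph G) C} =
      Nat.card {D : Set V // IsVertexCover G D} := by
  refine ⟨fun C hC => part1 hC, fun D hD => part2 hD, fun C hC => part3 hC, ?_, ?_⟩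
  · intro C hC
    rw [part3 hC]
    set D := {v : V | Sum.inl v ∈ C}
    have hdisj : Disjoint (Sum.inl '' D) (Sum.inr '' Dᶜ : Set (V ⊕ V)) := by
      rw [Set.disjoint_left]
      rintro x ⟨u, -, rfl⟩ ⟨w, -, hw⟩
      cases hw
    haveI : Finite V := Finite.of_fintype V
    rw [Set.ncard_union_eq hdisj (Set.toFinite _) (Set.toFinite _),
      Set.ncard_image_of_injective _ Sum.inl_injective,
      Set.ncard_image_of_injective _ Sum.inr_injective,
      Set.ncard_add_ncard_compl, Nat.card_eq_fintype_card]
  · apply Nat.card_congr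
    refine ⟨fun C => ⟨{v : V | Sum.inl v ∈ C.1}, part1 C.2⟩,
      fun D => ⟨(Sum.inl '' D.1) ∪ (Sum.inr '' D.1ᶜ), part2 D.2⟩, ?_, ?_⟩
    · rintro ⟨C, hC⟩
      exact Subtype.ext (part3 hC).symm
    · rintro ⟨D, hD⟩
      refine Subtype.ext ?_
      ext v
      simp only [Set.mem_setOf_eq, Set.mem_union, Set.mem_image]
      constructor
      · rintro (⟨u, hu, hu'⟩ | ⟨u, -, hu'⟩)
        · obtain rfl := Sum.inl.inj hu'; exact hu
        · cases hu'
      · intro hv; exact Or.inl ⟨v, hv, rfl⟩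
end

section
/- Let G be a finite simple graph with clique partition π = {W₁,…,W_r}. For each vertex v of G let i(v) be the index with v ∈ W_{i(v)}. Then the map sending an independent set A of G^π to A defines a bijection between the maximal independent sets of G^π and the sets of the form D ∪ {wᵢ : no vertex of Wᵢ lies in D}, where D ranges over the independent sets of G; in particular, the number of maximal independent sets of G^π equals the number of independent sets of G. -/
lemma cw_inl_inl {V ι : Type*} (G : SimpleGraph V) (p : V → ι) (u v : V) :
    (cliqueWhisker G p).Adj (Sum.inl u) (Sum.inl v) ↔ G.Adj u v := by
  simp only [cliqueWhisker, SimpleGraph.fromRel_adj]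
  constructor
  · rintro ⟨h, h1 | h1⟩
    · exact h1
    · exact h1.symm
  · intro h
    exact ⟨by simp [h.ne], Or.inl h⟩

lemma cw_inl_inr {V ι : Type*} (G : SimpleGraph V) (p : V → ι) (u : V) (i : ι) :
    (cliqueWhisker G p).Adj (Sum.inl u) (Sum.inr i) ↔ p u = i := by
  simp [cliqueWhisker, SimpleGraph.fromRel_adj]

lemma cw_inr_inr {V ι : Type*} (G : SimpleGraph V) (p : V → ι) (i j : ι) :
    ¬ (cliqueWhisker G p).Adj (Sum.inr i) (Sum.inr j) := by
  simp [cliqueWhisker, SimpleGraph.fromRel_adj]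

/-- The candidate maximal independent set associated to an independent set `D`. -/
def wSet {V ι : Type*} (p : V → ι) (D : Set V) : Set (V ⊕ ι) :=
  (Sum.inl '' D) ∪ (Sum.inr '' {i : ι | ∀ v, p v = i → v ∉ D})

lemma wSet_indep {V ι : Type*} (G : SimpleGraph V) (p : V → ι) {D : Set V}
    (hD : IsIndep G D) : IsIndep (cliqueWhisker G p) (wSet p D) := by
  rintro a ha b hb hab
  rcases ha with ⟨u, hu, rfl⟩ | ⟨i, hi, rfl⟩ <;>
    rcases hb with ⟨v, hv, rfl⟩ | ⟨j, hj, rfl⟩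
  · exact hD u hu v hv ((cw_inl_inl G p u v).mp hab)
  · exact hj u ((cw_inl_inr G p u j).mp hab) hu
  · exact hi v ((cw_inl_inr G p v i).mp hab.symm) hv
  · exact cw_inr_inr G p i j hab

lemma wSet_max {V ι : Type*} (G : SimpleGraph V) (p : V → ι)
    (hclique : ∀ u v : V, p u = p v → u ≠ v → G.Adj u v) {D : Set V} (hD : IsIndep G D) :
    ∀ B, IsIndep (cliqueWhisker G p) B → wSet p D ⊆ B → wSet p D = B := by
  intro B hB hsub
  refine Set.Subset.antisymm hsub ?_
  rintro (v | i) hx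
  · -- show v ∈ D
    left
    refine ⟨v, ?_, rfl⟩
    by_contra hv
    by_cases h : ∀ u, p u = p v → u ∉ D
    · have hmem : Sum.inr (p v) ∈ B := hsub (Or.inr ⟨p v, h, rfl⟩)
      exact hB _ hx _ hmem ((cw_inl_inr G p v (p v)).mpr rfl)
    · push_neg at h
      obtain ⟨u, hpu, hu⟩ := h
      have hne : u ≠ v := fun h' => hv (h' ▸ hu)
      have : Sum.inl u ∈ B := hsub (Or.inl ⟨u, hu, rfl⟩)
      exact hB _ this _ hx ((cw_inl_inl G p u v).mpr (hclique u v hpu hne))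
  · right
    refine ⟨i, ?_, rfl⟩
    intro v hpv hv
    have : Sum.inl v ∈ B := hsub (Or.inl ⟨v, hv, rfl⟩)
    exact hB _ this _ hx ((cw_inl_inr G p v i).mpr hpv)

theorem stmt19 {V : Type*} [Fintype V] {r : ℕ} (G : SimpleGraph V) (p : V → Fin r)
    (hclique : ∀ u v : V, p u = p v → u ≠ v → G.Adj u v)
    (hsurj : Function.Surjective p) :
    (∀ A : Set (V ⊕ Fin r),
      (IsIndep (cliqueWhisker G p) A ∧
          ∀ B, IsIndep (cliqueWhisker G p) B → A ⊆ B → A = B) ↔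
        ∃ D : Set V, IsIndep G D ∧
          A = (Sum.inl '' D) ∪ (Sum.inr '' {i : Fin r | ∀ v, p v = i → v ∉ D})) ∧
    Nat.card {A : Set (V ⊕ Fin r) //
        IsIndep (cliqueWhisker G p) A ∧
          ∀ B, IsIndep (cliqueWhisker G p) B → A ⊆ B → A = B} =
      Nat.card {D : Set V // IsIndep G D} := by
  have key : ∀ A : Set (V ⊕ Fin r),
      (IsIndep (cliqueWhisker G p) A ∧
          ∀ B, IsIndep (cliqueWhisker G p) B → A ⊆ B → A = B) ↔
        ∃ D : Set V, IsIndep G D ∧ A = wSet p D := by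
    intro A
    constructor
    · rintro ⟨hA, hmax⟩
      set D : Set V := {v | Sum.inl v ∈ A} with hDdef
      have hD : IsIndep G D := fun u hu v hv huv =>
        hA _ hu _ hv ((cw_inl_inl G p u v).mpr huv)
      refine ⟨D, hD, ?_⟩
      have hsub : A ⊆ wSet p D := by
        rintro (v | i) hx
        · exact Or.inl ⟨v, hx, rfl⟩
        · refine Or.inr ⟨i, ?_, rfl⟩
          intro v hpv hv
          exact hA _ hv _ hx ((cw_inl_inr G p v i).mpr hpv)
      exact hmax _ (wSet_indep G p hD) hsub
    · rintro ⟨D, hD, rfl⟩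
      exact ⟨wSet_indep G p hD, wSet_max G p hclique hD⟩
  refine ⟨key, ?_⟩
  have hbij : Function.Bijective
      (fun D : {D : Set V // IsIndep G D} =>
        (⟨wSet p D.1, (key _).mpr ⟨D.1, D.2, rfl⟩⟩ :
          {A : Set (V ⊕ Fin r) // IsIndep (cliqueWhisker G p) A ∧
            ∀ B, IsIndep (cliqueWhisker G p) B → A ⊆ B → A = B})) := by
    constructor
    · rintro ⟨D₁, h₁⟩ ⟨D₂, h₂⟩ h
      simp only [Subtype.mk.injEq] at h ⊢
      ext v
      have := Set.ext_iff.mp h (Sum.inl v)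
      simpa [wSet] using this
    · rintro ⟨A, hA⟩
      obtain ⟨D, hD, rfl⟩ := (key A).mp hA
      exact ⟨⟨D, hD⟩, rfl⟩
  exact (Nat.card_eq_of_bijective _ hbij).symm
end
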